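/- arXiv:1110.0263 — 3 statements merged into one kernel-verified Lean document; each statement's English description precedes it below -/
import Mathlib

section
/- For every n ≥ 1 there is an isomorphism of superalgebras from the super tensor product ℂS_n^- ⊗ Cl_n onto the Hecke–Clifford algebra Hc_n, determined by 1 ⊗ c_i ↦ c_i for 1 ≤ i ≤ n and t_j ⊗ 1 ↦ (1/√(−2))·s_j(c_j − c_{j+1}) for 1 ≤ j ≤ n−1. -/
noncomputable section

/-- Free algebra on generators `t₁,…,t_{n-1}` (the `Sum.inl`s) and `c₁,…,c_n`
(the `Sum.inr`s). -/
abbrev FA (n : ℕ) : Type := FreeAlgebra ℂ (Fin (n-1) ⊕ Fin n)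

def tg (n : ℕ) (i : Fin (n-1)) : FA n := FreeAlgebra.ι ℂ (Sum.inl i)
def cg (n : ℕ) (i : Fin n) : FA n := FreeAlgebra.ι ℂ (Sum.inr i)

/-- The defining relations of the super tensor product `ℂS_n⁻ ⊗ Cl_n`:
the spin symmetric group algebra relations among the odd generators `t_i`, the
Clifford relations among the odd generators `c_i`, and the super-commutation
relations `t_i c_j = - c_j t_i` coming from the sign rule in the super tensor
product of the two superalgebras. -/
inductive SpinTensorRel (n : ℕ) : FA n → FA n → Prop
  | tsq (i : Fin (n-1)) : SpinTensorRel n (tg n i * tg n i) 1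
  | braid (i j : Fin (n-1)) (h : (j : ℕ) = (i : ℕ) + 1) :
      SpinTensorRel n (tg n i * tg n j * tg n i) (tg n j * tg n i * tg n j)
  | tfar (i j : Fin (n-1)) (h : (i : ℕ) + 1 < (j : ℕ)) :
      SpinTensorRel n (tg n i * tg n j) (-(tg n j * tg n i))
  | csq (i : Fin n) : SpinTensorRel n (cg n i * cg n i) 1
  | cskew (i j : Fin n) (h : i ≠ j) :
      SpinTensorRel n (cg n i * cg n j) (-(cg n j * cg n i))
  | mix (i : Fin (n-1)) (j : Fin n) :
      SpinTensorRel n (tg n i * cg n j) (-(cg n j * tg n i))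

/-- The super tensor product `ℂS_n⁻ ⊗ Cl_n`, presented by generators and
relations. -/
abbrev SpinTensor (n : ℕ) : Type := RingQuot (SpinTensorRel n)

def stT (n : ℕ) (i : Fin (n-1)) : SpinTensor n :=
  RingQuot.mkAlgHom ℂ (SpinTensorRel n) (tg n i)
def stC (n : ℕ) (i : Fin n) : SpinTensor n :=
  RingQuot.mkAlgHom ℂ (SpinTensorRel n) (cg n i)

/-- Free algebra on generators `s₁,…,s_{n-1}` (the `Sum.inl`s) and `c₁,…,c_n`
(the `Sum.inr`s). -/
abbrev FB (n : ℕ) : Type := FreeAlgebra ℂ (Fin (n-1) ⊕ Fin n)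

def sg (n : ℕ) (i : Fin (n-1)) : FB n := FreeAlgebra.ι ℂ (Sum.inl i)
def dg (n : ℕ) (i : Fin n) : FB n := FreeAlgebra.ι ℂ (Sum.inr i)

/-- The defining relations of the Hecke-Clifford algebra `Hc_n = Cl_n ⋊ ℂS_n`:
the Coxeter relations among the `s_i`, the Clifford relations among the `c_i`,
and the mixed relations `s_i c_i = c_{i+1} s_i`, `s_i c_{i+1} = c_i s_i`, and
`s_i c_j = c_j s_i` for `j ≠ i, i+1`. -/
inductive HCRel (n : ℕ) : FB n → FB n → Prop
  | ssq (i : Fin (n-1)) : HCRel n (sg n i * sg n i) 1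
  | braid (i j : Fin (n-1)) (h : (j : ℕ) = (i : ℕ) + 1) :
      HCRel n (sg n i * sg n j * sg n i) (sg n j * sg n i * sg n j)
  | sfar (i j : Fin (n-1)) (h : (i : ℕ) + 1 < (j : ℕ)) :
      HCRel n (sg n i * sg n j) (sg n j * sg n i)
  | csq (i : Fin n) : HCRel n (dg n i * dg n i) 1
  | cskew (i j : Fin n) (h : i ≠ j) :
      HCRel n (dg n i * dg n j) (-(dg n j * dg n i))
  | sc1 (i : ℕ) (h : i < n - 1) (h1 : i < n) (h2 : i + 1 < n) :
      HCRel n (sg n ⟨i, h⟩ * dg n ⟨i, h1⟩) (dg n ⟨i+1, h2⟩ * sg n ⟨i, h⟩)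
  | sc2 (i : ℕ) (h : i < n - 1) (h1 : i < n) (h2 : i + 1 < n) :
      HCRel n (sg n ⟨i, h⟩ * dg n ⟨i+1, h2⟩) (dg n ⟨i, h1⟩ * sg n ⟨i, h⟩)
  | sc3 (i : ℕ) (h : i < n - 1) (j : Fin n) (hj1 : (j : ℕ) ≠ i) (hj2 : (j : ℕ) ≠ i + 1) :
      HCRel n (sg n ⟨i, h⟩ * dg n j) (dg n j * sg n ⟨i, h⟩)

/-- The Hecke-Clifford algebra `Hc_n`, presented by generators and relations. -/
abbrev HeckeClifford (n : ℕ) : Type := RingQuot (HCRel n)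

def hcS (n : ℕ) (i : Fin (n-1)) : HeckeClifford n :=
  RingQuot.mkAlgHom ℂ (HCRel n) (sg n i)
def hcC (n : ℕ) (i : Fin n) : HeckeClifford n :=
  RingQuot.mkAlgHom ℂ (HCRel n) (dg n i)

/-- A fixed square root of `-2` in `ℂ`. -/
def sqrtNeg2 : ℂ := Complex.I * (Real.sqrt 2 : ℝ)


section Abstract
variable {R : Type*} [Ring R]

lemma flip_anti {a b : R} (h : a*b = -(b*a)) : b*a = -(a*b) := by rw [h, neg_neg]

lemma comm_pair {x y s u v : R} (h1 : x*s = s*u) (h2 : y*s = s*v) :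
    (x - y)*s = s*(u - v) := by rw [sub_mul, h1, h2, mul_sub]

lemma anti_pair {x y t : R} (h1 : x*t = -(t*x)) (h2 : y*t = -(t*y)) :
    (x - y)*t = -(t*(x - y)) := by
  rw [sub_mul, h1, h2, mul_sub, neg_sub, sub_eq_iff_eq_add]
  abel

lemma anticomm_sub {x y u v : R} (hxu : x*u = -(u*x)) (hxv : x*v = -(v*x))
    (hyu : y*u = -(u*y)) (hyv : y*v = -(v*y)) :
    (x - y) * (u - v) = -((u - v) * (x - y)) := by
  have h : (x - y) * (u - v) + (u - v) * (x - y)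
      = (x*u + u*x) - (x*v + v*x) - (y*u + u*y) + (y*v + v*y) := by noncomm_ring
  rw [hxu, hxv, hyu, hyv] at h
  simp at h
  linear_combination (norm := noncomm_ring) h

lemma sub_sq_two {x y : R} (hx : x*x = 1) (hy : y*y = 1) (hxy : y*x = -(x*y)) :
    (x - y) * (x - y) = 2 := by
  have h : (x - y) * (x - y) = x*x - (x*y + y*x) + y*y := by noncomm_ring
  rw [hxy, hx, hy] at h
  rw [h]; norm_num

lemma adj_sum_neg_two {x y z : R} (hy : y*y = 1) (hxy : y*x = -(x*y))
    (hxz : z*x = -(x*z)) (hyz : z*y = -(y*z)) :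
    (x - y)*(y - z) + (y - z)*(x - y) = -2 := by
  have h : (x - y)*(y - z) + (y - z)*(x - y)
      = (x*y + y*x) - (x*z + z*x) + (y*z + z*y) - (y*y + y*y) := by noncomm_ring
  rw [hxy, hxz, hyz, hy] at h
  rw [h]; norm_num

lemma mid_braid {a b : R} (ha : a*a = 2) (hb : b*b = 2) (hs : a*b + b*a = -2) :
    a*b*a = b*a*b := by
  have h1 : a*b = -2 - b*a := by linear_combination (norm := noncomm_ring) hs
  have h2 : b*a = -2 - a*b := by linear_combination (norm := noncomm_ring) hs
  have e1 : a*b*a = -(2*a) - b*2 := by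
    calc a*b*a = (-2 - b*a)*a := by rw [h1]
      _ = -(2*a) - b*(a*a) := by noncomm_ring
      _ = -(2*a) - b*2 := by rw [ha]
  have e2 : b*a*b = -(2*b) - a*2 := by
    calc b*a*b = (-2 - a*b)*b := by rw [h2]
      _ = -(2*b) - a*(b*b) := by noncomm_ring
      _ = -(2*b) - a*2 := by rw [hb]
  rw [e1, e2]; noncomm_ring

lemma word_sq {s a : R} (hs : s*s = 1) (ha : a*a = 2) (hc : a*s = -(s*a)) :
    s*a*(s*a) = -2 := by
  calc s*a*(s*a) = s*(a*s)*a := by noncomm_ring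
    _ = s*(-(s*a))*a := by rw [hc]
    _ = -(s*s*(a*a)) := by noncomm_ring
    _ = -(1*(2:R)) := by rw [hs, ha]
    _ = -2 := by norm_num

lemma word_far_hc {s₁ a₁ s₂ a₂ : R} (h1 : a₁*s₂ = s₂*a₁) (h2 : a₂*s₁ = s₁*a₂)
    (h3 : s₁*s₂ = s₂*s₁) (h4 : a₁*a₂ = -(a₂*a₁)) :
    s₁*a₁*(s₂*a₂) = -(s₂*a₂*(s₁*a₁)) := by
  calc s₁*a₁*(s₂*a₂) = s₁*(a₁*s₂)*a₂ := by noncomm_ring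
    _ = s₁*(s₂*a₁)*a₂ := by rw [h1]
    _ = (s₁*s₂)*(a₁*a₂) := by noncomm_ring
    _ = (s₂*s₁)*(-(a₂*a₁)) := by rw [h3, h4]
    _ = -(s₂*(s₁*a₂)*a₁) := by noncomm_ring
    _ = -(s₂*(a₂*s₁)*a₁) := by rw [h2]
    _ = -(s₂*a₂*(s₁*a₁)) := by noncomm_ring

lemma word_far_spin {t₁ a₁ t₂ a₂ : R} (h12 : a₁*t₂ = -(t₂*a₁)) (h21 : a₂*t₁ = -(t₁*a₂))
    (ht : t₁*t₂ = -(t₂*t₁)) (h4 : a₁*a₂ = -(a₂*a₁)) :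
    t₁*a₁*(t₂*a₂) = t₂*a₂*(t₁*a₁) := by
  have e1 : t₁*a₁*(t₂*a₂) = -((t₂*t₁)*(a₂*a₁)) := by
    calc t₁*a₁*(t₂*a₂) = t₁*(a₁*t₂)*a₂ := by noncomm_ring
      _ = t₁*(-(t₂*a₁))*a₂ := by rw [h12]
      _ = -((t₁*t₂)*(a₁*a₂)) := by noncomm_ring
      _ = -((-(t₂*t₁))*(-(a₂*a₁))) := by rw [ht, h4]
      _ = -((t₂*t₁)*(a₂*a₁)) := by noncomm_ring
  have e2 : t₂*a₂*(t₁*a₁) = -((t₂*t₁)*(a₂*a₁)) := by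
    calc t₂*a₂*(t₁*a₁) = t₂*(a₂*t₁)*a₁ := by noncomm_ring
      _ = t₂*(-(t₁*a₂))*a₁ := by rw [h21]
      _ = -((t₂*t₁)*(a₂*a₁)) := by noncomm_ring
  rw [e1, e2]

lemma word_braid_hc {s₁ s₂ a₁ a₂ d : R}
    (hb : s₁*s₂*s₁ = s₂*s₁*s₂)
    (h1 : a₁*s₂ = s₂*d) (h2 : a₂*s₁ = s₁*d)
    (h3 : d*s₁ = s₁*a₂) (h4 : d*s₂ = s₂*a₁)
    (hd : d*d = 2) (hsum : a₁ = d - a₂) :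
    s₁*a₁*(s₂*a₂)*(s₁*a₁) = s₂*a₂*(s₁*a₁)*(s₂*a₂) := by
  have mid : a₂*(d*a₁) = a₁*(d*a₂) := by
    rw [hsum]
    have e1 : a₂*(d*(d - a₂)) = a₂*(d*d) - a₂*(d*a₂) := by noncomm_ring
    have e2 : (d - a₂)*(d*a₂) = (d*d)*a₂ - a₂*(d*a₂) := by noncomm_ring
    rw [e1, e2, hd]
    noncomm_ring
  calc s₁*a₁*(s₂*a₂)*(s₁*a₁) = s₁*(a₁*s₂)*(a₂*s₁)*a₁ := by noncomm_ring
    _ = s₁*(s₂*d)*(s₁*d)*a₁ := by rw [h1, h2]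
    _ = s₁*s₂*(d*s₁)*(d*a₁) := by noncomm_ring
    _ = s₁*s₂*(s₁*a₂)*(d*a₁) := by rw [h3]
    _ = (s₁*s₂*s₁)*(a₂*(d*a₁)) := by noncomm_ring
    _ = (s₂*s₁*s₂)*(a₁*(d*a₂)) := by rw [hb, mid]
    _ = s₂*s₁*(s₂*a₁)*(d*a₂) := by noncomm_ring
    _ = s₂*s₁*(d*s₂)*(d*a₂) := by rw [h4]
    _ = s₂*(s₁*d)*(s₂*d)*a₂ := by noncomm_ring
    _ = s₂*(a₂*s₁)*(a₁*s₂)*a₂ := by rw [h1, h2]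
    _ = s₂*a₂*(s₁*a₁)*(s₂*a₂) := by noncomm_ring

lemma word_braid_spin {t₁ t₂ a₁ a₂ : R}
    (tb : t₁*t₂*t₁ = t₂*t₁*t₂)
    (h11 : a₁*t₁ = -(t₁*a₁)) (h12 : a₁*t₂ = -(t₂*a₁))
    (h21 : a₂*t₁ = -(t₁*a₂)) (h22 : a₂*t₂ = -(t₂*a₂))
    (am : a₁*a₂*a₁ = a₂*a₁*a₂) :
    t₁*a₁*(t₂*a₂)*(t₁*a₁) = t₂*a₂*(t₁*a₁)*(t₂*a₂) := by
  have e1 : t₁*a₁*(t₂*a₂)*(t₁*a₁) = -((t₁*t₂*t₁)*(a₁*a₂*a₁)) := by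
    calc t₁*a₁*(t₂*a₂)*(t₁*a₁) = t₁*(a₁*t₂)*(a₂*t₁)*a₁ := by noncomm_ring
      _ = t₁*(-(t₂*a₁))*(-(t₁*a₂))*a₁ := by rw [h12, h21]
      _ = t₁*t₂*(a₁*t₁)*(a₂*a₁) := by noncomm_ring
      _ = t₁*t₂*(-(t₁*a₁))*(a₂*a₁) := by rw [h11]
      _ = -((t₁*t₂*t₁)*(a₁*a₂*a₁)) := by noncomm_ring
  have e2 : t₂*a₂*(t₁*a₁)*(t₂*a₂) = -((t₂*t₁*t₂)*(a₂*a₁*a₂)) := by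
    calc t₂*a₂*(t₁*a₁)*(t₂*a₂) = t₂*(a₂*t₁)*(a₁*t₂)*a₂ := by noncomm_ring
      _ = t₂*(-(t₁*a₂))*(-(t₂*a₁))*a₂ := by rw [h12, h21]
      _ = t₂*t₁*(a₂*t₂)*(a₁*a₂) := by noncomm_ring
      _ = t₂*t₁*(-(t₂*a₂))*(a₁*a₂) := by rw [h22]
      _ = -((t₂*t₁*t₂)*(a₂*a₁*a₂)) := by noncomm_ring
  rw [e1, e2, tb, am]

lemma word_mix1 {s c c' : R} (hc : c*c = 1) (hc' : c'*c' = 1)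
    (hcc : c'*c = -(c*c')) (hs1 : c*s = s*c') (hs2 : c'*s = s*c) :
    s*(c - c')*c = -(c*(s*(c - c'))) := by
  have e1 : s*(c - c')*c = s*(c*c) - s*(c'*c) := by noncomm_ring
  have e2 : -(c*(s*(c - c'))) = -((c*s)*(c - c')) := by noncomm_ring
  rw [e1, e2, hcc, hc, hs1]
  have e3 : -((s*c')*(c - c')) = -(s*(c'*c) - s*(c'*c')) := by noncomm_ring
  rw [e3, hcc, hc']
  noncomm_ring

lemma word_mix2 {s c c' : R} (hc : c*c = 1) (hc' : c'*c' = 1)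
    (hcc : c'*c = -(c*c')) (hs1 : c*s = s*c') (hs2 : c'*s = s*c) :
    s*(c - c')*c' = -(c'*(s*(c - c'))) := by
  have e1 : s*(c - c')*c' = s*(c*c') - s*(c'*c') := by noncomm_ring
  have e2 : -(c'*(s*(c - c'))) = -((c'*s)*(c - c')) := by noncomm_ring
  rw [e1, e2, hc', hs2]
  have e3 : -((s*c)*(c - c')) = -(s*(c*c) - s*(c*c')) := by noncomm_ring
  rw [e3, hc]
  noncomm_ring

lemma word_mix3 {s a k : R} (h1 : a*k = -(k*a)) (h2 : k*s = s*k) :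
    s*a*k = -(k*(s*a)) := by
  calc s*a*k = s*(a*k) := by noncomm_ring
    _ = -(s*(k*a)) := by rw [h1]; noncomm_ring
    _ = -((s*k)*a) := by noncomm_ring
    _ = -((k*s)*a) := by rw [h2]
    _ = -(k*(s*a)) := by noncomm_ring

lemma word_sc1 {t c c' : R} (hc : c*c = 1) (hc' : c'*c' = 1)
    (hcc : c'*c = -(c*c')) (ht : c*t = -(t*c)) (ht' : c'*t = -(t*c')) :
    t*(c - c')*c = c'*(t*(c - c')) := by
  have e1 : t*(c - c')*c = t*(c*c) - t*(c'*c) := by noncomm_ring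
  have e2 : c'*(t*(c - c')) = (c'*t)*(c - c') := by noncomm_ring
  rw [e1, e2, hcc, hc, ht']
  have e3 : -(t*c')*(c - c') = -(t*(c'*c) - t*(c'*c')) := by noncomm_ring
  rw [e3, hcc, hc']
  noncomm_ring

lemma word_sc2 {t c c' : R} (hc : c*c = 1) (hc' : c'*c' = 1)
    (hcc : c'*c = -(c*c')) (ht : c*t = -(t*c)) (ht' : c'*t = -(t*c')) :
    t*(c - c')*c' = c*(t*(c - c')) := by
  have e1 : t*(c - c')*c' = t*(c*c') - t*(c'*c') := by noncomm_ring
  have e2 : c*(t*(c - c')) = (c*t)*(c - c') := by noncomm_ring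
  rw [e1, e2, hc', ht]
  have e3 : -(t*c)*(c - c') = -(t*(c*c) - t*(c*c')) := by noncomm_ring
  rw [e3, hc]
  noncomm_ring

lemma word_sc3 {t a k : R} (h1 : a*k = -(k*a)) (h2 : k*t = -(t*k)) :
    t*a*k = k*(t*a) := by
  calc t*a*k = t*(a*k) := by noncomm_ring
    _ = -(t*(k*a)) := by rw [h1]; noncomm_ring
    _ = -((t*k)*a) := by noncomm_ring
    _ = (k*t)*a := by rw [h2]; noncomm_ring
    _ = k*(t*a) := by noncomm_ring

end Abstract
lemma sqrtNeg2_mul_self : sqrtNeg2 * sqrtNeg2 = -2 := by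
  have h2 : Real.sqrt 2 * Real.sqrt 2 = 2 := Real.mul_self_sqrt (by norm_num)
  calc sqrtNeg2 * sqrtNeg2
      = (Complex.I*Complex.I) * ((Real.sqrt 2 * Real.sqrt 2 : ℝ) : ℂ) := by
        simp only [sqrtNeg2]; push_cast; ring
    _ = -2 := by rw [Complex.I_mul_I, h2]; norm_num

lemma sqrtNeg2_ne_zero : sqrtNeg2 ≠ 0 := by
  intro h
  have := sqrtNeg2_mul_self
  rw [h] at this
  norm_num at this

lemma scalar1 : sqrtNeg2⁻¹ * sqrtNeg2⁻¹ * (-2) = 1 := by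
  have h := sqrtNeg2_mul_self
  have h0 := sqrtNeg2_ne_zero
  field_simp
  linear_combination -h

lemma scalar2 : (sqrtNeg2/2) * (sqrtNeg2/2) * (-2) = 1 := by
  linear_combination (-1/2)*sqrtNeg2_mul_self

lemma scalar3 : sqrtNeg2⁻¹ * (sqrtNeg2/2) * 2 = 1 := by
  have h0 := sqrtNeg2_ne_zero
  field_simp

lemma scalar4 : (sqrtNeg2/2) * sqrtNeg2⁻¹ * 2 = 1 := by
  have h0 := sqrtNeg2_ne_zero
  field_simp

section SmulHelp
variable {R : Type*} [Ring R] [Algebra ℂ R]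

lemma neg_two_smul_one : ((-2:ℂ)) • (1:R) = -2 := by
  rw [← Algebra.algebraMap_eq_smul_one]; simp [map_ofNat]

lemma smul_sq_eq_one (c : ℂ) (x : R) (hx : x * x = -2) (hc : c*c*(-2) = 1) :
    (c • x) * (c • x) = 1 := by
  rw [smul_mul_assoc, mul_smul_comm, smul_smul, hx, ← neg_two_smul_one, smul_smul, hc, one_smul]

lemma smul_smul_word (c d : ℂ) (t a : R) (ha : a*a = 2) (h : c*d*2 = 1) :
    c • ((d • (t*a)) * a) = t := by
  rw [smul_mul_assoc, smul_smul, mul_assoc, ha]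
  rw [show t*(2:R) = ((2:ℂ)) • t by rw [mul_two, two_smul]]
  rw [smul_smul, h, one_smul]
end SmulHelp
-- concrete relation lemmas
section Concrete
variable (n : ℕ)

-- Hecke-Clifford relations
lemma hc_ss (i : Fin (n-1)) : hcS n i * hcS n i = 1 := by
  simpa only [map_mul, map_one, hcS] using RingQuot.mkAlgHom_rel ℂ (HCRel.ssq i)

lemma hc_braid (i j : Fin (n-1)) (h : (j:ℕ) = (i:ℕ)+1) :
    hcS n i * hcS n j * hcS n i = hcS n j * hcS n i * hcS n j := by
  simpa only [map_mul, hcS] using RingQuot.mkAlgHom_rel ℂ (HCRel.braid i j h)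

lemma hc_sfar (i j : Fin (n-1)) (h : (i:ℕ)+1 < (j:ℕ)) :
    hcS n i * hcS n j = hcS n j * hcS n i := by
  simpa only [map_mul, hcS] using RingQuot.mkAlgHom_rel ℂ (HCRel.sfar i j h)

lemma hc_cc (i : Fin n) : hcC n i * hcC n i = 1 := by
  simpa only [map_mul, map_one, hcC] using RingQuot.mkAlgHom_rel ℂ (HCRel.csq i)

lemma hc_skew (i j : Fin n) (h : i ≠ j) : hcC n i * hcC n j = -(hcC n j * hcC n i) := by
  simpa only [map_mul, map_neg, hcC] using RingQuot.mkAlgHom_rel ℂ (HCRel.cskew i j h)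

lemma hc_sc1 (i : ℕ) (h : i < n-1) (h1 : i < n) (h2 : i+1 < n) :
    hcS n ⟨i,h⟩ * hcC n ⟨i,h1⟩ = hcC n ⟨i+1,h2⟩ * hcS n ⟨i,h⟩ := by
  simpa only [map_mul, hcS, hcC] using RingQuot.mkAlgHom_rel ℂ (HCRel.sc1 i h h1 h2)

lemma hc_sc2 (i : ℕ) (h : i < n-1) (h1 : i < n) (h2 : i+1 < n) :
    hcS n ⟨i,h⟩ * hcC n ⟨i+1,h2⟩ = hcC n ⟨i,h1⟩ * hcS n ⟨i,h⟩ := by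
  simpa only [map_mul, hcS, hcC] using RingQuot.mkAlgHom_rel ℂ (HCRel.sc2 i h h1 h2)

lemma hc_sc3 (i : ℕ) (h : i < n-1) (j : Fin n) (hj1 : (j:ℕ) ≠ i) (hj2 : (j:ℕ) ≠ i+1) :
    hcS n ⟨i,h⟩ * hcC n j = hcC n j * hcS n ⟨i,h⟩ := by
  simpa only [map_mul, hcS, hcC] using RingQuot.mkAlgHom_rel ℂ (HCRel.sc3 i h j hj1 hj2)

-- Spin tensor relations
lemma st_tt (i : Fin (n-1)) : stT n i * stT n i = 1 := by
  simpa only [map_mul, map_one, stT] using RingQuot.mkAlgHom_rel ℂ (SpinTensorRel.tsq i)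

lemma st_braid (i j : Fin (n-1)) (h : (j:ℕ) = (i:ℕ)+1) :
    stT n i * stT n j * stT n i = stT n j * stT n i * stT n j := by
  simpa only [map_mul, stT] using RingQuot.mkAlgHom_rel ℂ (SpinTensorRel.braid i j h)

lemma st_tfar (i j : Fin (n-1)) (h : (i:ℕ)+1 < (j:ℕ)) :
    stT n i * stT n j = -(stT n j * stT n i) := by
  simpa only [map_mul, map_neg, stT] using RingQuot.mkAlgHom_rel ℂ (SpinTensorRel.tfar i j h)

lemma st_cc (i : Fin n) : stC n i * stC n i = 1 := by
  simpa only [map_mul, map_one, stC] using RingQuot.mkAlgHom_rel ℂ (SpinTensorRel.csq i)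

lemma st_skew (i j : Fin n) (h : i ≠ j) : stC n i * stC n j = -(stC n j * stC n i) := by
  simpa only [map_mul, map_neg, stC] using RingQuot.mkAlgHom_rel ℂ (SpinTensorRel.cskew i j h)

lemma st_mix (i : Fin (n-1)) (j : Fin n) : stT n i * stC n j = -(stC n j * stT n i) := by
  simpa only [map_mul, map_neg, stT, stC] using RingQuot.mkAlgHom_rel ℂ (SpinTensorRel.mix i j)

end Concrete
-- derived difference lemmas and the two algebra maps
section Maps
variable (n : ℕ)

lemma hcA_sq (i : ℕ) (h1 : i < n) (h2 : i+1 < n) :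
    (hcC n ⟨i,h1⟩ - hcC n ⟨i+1,h2⟩) * (hcC n ⟨i,h1⟩ - hcC n ⟨i+1,h2⟩) = 2 :=
  sub_sq_two (hc_cc n _) (hc_cc n _)
    (hc_skew n _ _ (by simp [Fin.ext_iff]))

lemma hcA_anti (i : ℕ) (h : i < n-1) (h1 : i < n) (h2 : i+1 < n) :
    (hcC n ⟨i,h1⟩ - hcC n ⟨i+1,h2⟩) * hcS n ⟨i,h⟩
      = -(hcS n ⟨i,h⟩ * (hcC n ⟨i,h1⟩ - hcC n ⟨i+1,h2⟩)) := by
  rw [sub_mul, ← hc_sc2 n i h h1 h2, ← hc_sc1 n i h h1 h2, mul_sub]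
  abel

lemma stA_sq (i : ℕ) (h1 : i < n) (h2 : i+1 < n) :
    (stC n ⟨i,h1⟩ - stC n ⟨i+1,h2⟩) * (stC n ⟨i,h1⟩ - stC n ⟨i+1,h2⟩) = 2 :=
  sub_sq_two (st_cc n _) (st_cc n _)
    (st_skew n _ _ (by simp [Fin.ext_iff]))

lemma stA_anti (t : Fin (n-1)) (x y : Fin n) :
    (stC n x - stC n y) * stT n t = -(stT n t * (stC n x - stC n y)) :=
  anti_pair (flip_anti (st_mix n t x)) (flip_anti (st_mix n t y))

def PhiMap : Fin (n-1) ⊕ Fin n → HeckeClifford n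
  | Sum.inl j => sqrtNeg2⁻¹ • (hcS n j *
      (hcC n ⟨j.1, Nat.lt_of_lt_of_le j.2 (Nat.sub_le n 1)⟩
        - hcC n ⟨j.1+1, Nat.add_lt_of_lt_sub j.2⟩))
  | Sum.inr i => hcC n i

def PsiMap : Fin (n-1) ⊕ Fin n → SpinTensor n
  | Sum.inl j => (sqrtNeg2/2) • (stT n j *
      (stC n ⟨j.1, Nat.lt_of_lt_of_le j.2 (Nat.sub_le n 1)⟩
        - stC n ⟨j.1+1, Nat.add_lt_of_lt_sub j.2⟩))
  | Sum.inr i => stC n i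

def PhiHom : FA n →ₐ[ℂ] HeckeClifford n := FreeAlgebra.lift ℂ (PhiMap n)
def PsiHom : FB n →ₐ[ℂ] SpinTensor n := FreeAlgebra.lift ℂ (PsiMap n)

lemma PhiHom_tg (j : Fin (n-1)) : PhiHom n (tg n j) = PhiMap n (Sum.inl j) :=
  FreeAlgebra.lift_ι_apply _ _
lemma PhiHom_cg (i : Fin n) : PhiHom n (cg n i) = hcC n i :=
  FreeAlgebra.lift_ι_apply _ _
lemma PsiHom_sg (j : Fin (n-1)) : PsiHom n (sg n j) = PsiMap n (Sum.inl j) :=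
  FreeAlgebra.lift_ι_apply _ _
lemma PsiHom_dg (i : Fin n) : PsiHom n (dg n i) = stC n i :=
  FreeAlgebra.lift_ι_apply _ _

end Maps
section Rel
variable (n : ℕ)

lemma hc_skew' (a b : ℕ) (ha : a < n) (hb : b < n) (hab : a ≠ b) :
    hcC n ⟨a,ha⟩ * hcC n ⟨b,hb⟩ = -(hcC n ⟨b,hb⟩ * hcC n ⟨a,ha⟩) :=
  hc_skew n _ _ (Fin.ne_of_val_ne hab)

lemma hc_sc3' (i : ℕ) (h : i < n-1) (k : ℕ) (hk : k < n) (h1 : k ≠ i) (h2 : k ≠ i+1) :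
    hcS n ⟨i,h⟩ * hcC n ⟨k,hk⟩ = hcC n ⟨k,hk⟩ * hcS n ⟨i,h⟩ :=
  hc_sc3 n i h ⟨k,hk⟩ h1 h2

lemma st_skew' (a b : ℕ) (ha : a < n) (hb : b < n) (hab : a ≠ b) :
    stC n ⟨a,ha⟩ * stC n ⟨b,hb⟩ = -(stC n ⟨b,hb⟩ * stC n ⟨a,ha⟩) :=
  st_skew n _ _ (Fin.ne_of_val_ne hab)

lemma PhiHom_rel : ∀ ⦃x y : FA n⦄, SpinTensorRel n x y → PhiHom n x = PhiHom n y := by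
  intro x y r
  cases r with
  | tsq i =>
    obtain ⟨iv, hi⟩ := i
    have h1 : iv < n := by omega
    have h2 : iv + 1 < n := by omega
    rw [map_mul, map_one, PhiHom_tg]
    simp only [PhiMap]
    exact smul_sq_eq_one _ _
      (word_sq (hc_ss n _) (hcA_sq n iv h1 h2) (hcA_anti n iv hi h1 h2)) scalar1
  | braid i j h =>
    obtain ⟨iv, hi⟩ := i
    obtain ⟨jv, hj⟩ := j
    have h' : jv = iv + 1 := h
    subst h'
    have hA1 : iv < n := by omega
    have hA2 : iv + 1 < n := by omega
    have hA3 : iv + 1 + 1 < n := by omega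
    simp only [map_mul, PhiHom_tg, PhiMap, smul_mul_assoc, mul_smul_comm, smul_smul]
    congr 1
    exact word_braid_hc (hc_braid n ⟨iv, hi⟩ ⟨iv+1, hj⟩ rfl)
      (comm_pair ((hc_sc3' n (iv+1) hj iv hA1 (by omega) (by omega)).symm)
        ((hc_sc2 n (iv+1) hj hA2 hA3).symm))
      (comm_pair ((hc_sc1 n iv hi hA1 hA2).symm)
        ((hc_sc3' n iv hi (iv+1+1) hA3 (by omega) (by omega)).symm))
      (comm_pair ((hc_sc2 n iv hi hA1 hA2).symm)
        ((hc_sc3' n iv hi (iv+1+1) hA3 (by omega) (by omega)).symm))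
      (comm_pair ((hc_sc3' n (iv+1) hj iv hA1 (by omega) (by omega)).symm)
        ((hc_sc1 n (iv+1) hj hA2 hA3).symm))
      (sub_sq_two (hc_cc n _) (hc_cc n _) (hc_skew' n (iv+1+1) iv hA3 hA1 (by omega)))
      (by abel)
  | tfar i j h =>
    obtain ⟨iv, hi⟩ := i
    obtain ⟨jv, hj⟩ := j
    have h' : iv + 1 < jv := h
    have hA1 : iv < n := by omega
    have hA2 : iv + 1 < n := by omega
    have hB1 : jv < n := by omega
    have hB2 : jv + 1 < n := by omega
    simp only [map_mul, map_neg, PhiHom_tg, PhiMap, smul_mul_assoc, mul_smul_comm, smul_smul]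
    rw [word_far_hc
      (comm_pair ((hc_sc3' n jv hj iv hA1 (by omega) (by omega)).symm)
        ((hc_sc3' n jv hj (iv+1) hA2 (by omega) (by omega)).symm))
      (comm_pair ((hc_sc3' n iv hi jv hB1 (by omega) (by omega)).symm)
        ((hc_sc3' n iv hi (jv+1) hB2 (by omega) (by omega)).symm))
      (hc_sfar n ⟨iv, hi⟩ ⟨jv, hj⟩ h')
      (anticomm_sub
        (hc_skew' n iv jv hA1 hB1 (by omega))
        (hc_skew' n iv (jv+1) hA1 hB2 (by omega))
        (hc_skew' n (iv+1) jv hA2 hB1 (by omega))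
        (hc_skew' n (iv+1) (jv+1) hA2 hB2 (by omega))),
      smul_neg]
  | csq i =>
    rw [map_mul, map_one, PhiHom_cg]
    exact hc_cc n i
  | cskew i j hij =>
    rw [map_mul, map_neg, map_mul, PhiHom_cg, PhiHom_cg]
    exact hc_skew n i j hij
  | mix i k =>
    obtain ⟨iv, hi⟩ := i
    have hA1 : iv < n := by omega
    have hA2 : iv + 1 < n := by omega
    rw [map_mul, map_neg, map_mul, PhiHom_tg, PhiHom_cg]
    simp only [PhiMap]
    rw [smul_mul_assoc, mul_smul_comm]
    obtain ⟨kv, hk⟩ := k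
    have w : hcS n ⟨iv,hi⟩ * (hcC n ⟨iv,hA1⟩ - hcC n ⟨iv+1,hA2⟩) * hcC n ⟨kv,hk⟩
        = -(hcC n ⟨kv,hk⟩ * (hcS n ⟨iv,hi⟩ * (hcC n ⟨iv,hA1⟩ - hcC n ⟨iv+1,hA2⟩))) := by
      by_cases e1 : kv = iv
      · subst e1
        exact word_mix1 (hc_cc n _) (hc_cc n _)
          (hc_skew' n (kv+1) kv hA2 hA1 (by omega))
          ((hc_sc2 n kv hi hA1 hA2).symm) ((hc_sc1 n kv hi hA1 hA2).symm)
      · by_cases e2 : kv = iv + 1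
        · subst e2
          exact word_mix2 (hc_cc n _) (hc_cc n _)
            (hc_skew' n (iv+1) iv hA2 hA1 (by omega))
            ((hc_sc2 n iv hi hA1 hA2).symm) ((hc_sc1 n iv hi hA1 hA2).symm)
        · exact word_mix3
            (anti_pair (hc_skew' n iv kv hA1 hk (by omega))
              (hc_skew' n (iv+1) kv hA2 hk (by omega)))
            ((hc_sc3' n iv hi kv hk e1 e2).symm)
    rw [w, smul_neg]
end Rel
section Rel2
variable (n : ℕ)

lemma PsiHom_rel : ∀ ⦃x y : FB n⦄, HCRel n x y → PsiHom n x = PsiHom n y := by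
  intro x y r
  cases r with
  | ssq i =>
    obtain ⟨iv, hi⟩ := i
    have h1 : iv < n := by omega
    have h2 : iv + 1 < n := by omega
    rw [map_mul, map_one, PsiHom_sg]
    simp only [PsiMap]
    exact smul_sq_eq_one _ _
      (word_sq (st_tt n _) (stA_sq n iv h1 h2)
        (stA_anti n ⟨iv,hi⟩ ⟨iv,h1⟩ ⟨iv+1,h2⟩)) scalar2
  | braid i j h =>
    obtain ⟨iv, hi⟩ := i
    obtain ⟨jv, hj⟩ := j
    have h' : jv = iv + 1 := h
    subst h'
    have hA1 : iv < n := by omega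
    have hA2 : iv + 1 < n := by omega
    have hA3 : iv + 1 + 1 < n := by omega
    simp only [map_mul, PsiHom_sg, PsiMap, smul_mul_assoc, mul_smul_comm, smul_smul]
    congr 1
    exact word_braid_spin (st_braid n ⟨iv, hi⟩ ⟨iv+1, hj⟩ rfl)
      (stA_anti n ⟨iv,hi⟩ ⟨iv,hA1⟩ ⟨iv+1,hA2⟩)
      (stA_anti n ⟨iv+1,hj⟩ ⟨iv,hA1⟩ ⟨iv+1,hA2⟩)
      (stA_anti n ⟨iv,hi⟩ ⟨iv+1,hA2⟩ ⟨iv+1+1,hA3⟩)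
      (stA_anti n ⟨iv+1,hj⟩ ⟨iv+1,hA2⟩ ⟨iv+1+1,hA3⟩)
      (mid_braid (stA_sq n iv hA1 hA2) (stA_sq n (iv+1) hA2 hA3)
        (adj_sum_neg_two (st_cc n ⟨iv+1,hA2⟩)
          (st_skew' n (iv+1) iv hA2 hA1 (by omega))
          (st_skew' n (iv+1+1) iv hA3 hA1 (by omega))
          (st_skew' n (iv+1+1) (iv+1) hA3 hA2 (by omega))))
  | sfar i j h =>
    obtain ⟨iv, hi⟩ := i
    obtain ⟨jv, hj⟩ := j
    have h' : iv + 1 < jv := h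
    have hA1 : iv < n := by omega
    have hA2 : iv + 1 < n := by omega
    have hB1 : jv < n := by omega
    have hB2 : jv + 1 < n := by omega
    simp only [map_mul, PsiHom_sg, PsiMap, smul_mul_assoc, mul_smul_comm, smul_smul]
    congr 1
    exact word_far_spin
      (stA_anti n ⟨jv,hj⟩ ⟨iv,hA1⟩ ⟨iv+1,hA2⟩)
      (stA_anti n ⟨iv,hi⟩ ⟨jv,hB1⟩ ⟨jv+1,hB2⟩)
      (st_tfar n ⟨iv, hi⟩ ⟨jv, hj⟩ h')
      (anticomm_sub
        (st_skew' n iv jv hA1 hB1 (by omega))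
        (st_skew' n iv (jv+1) hA1 hB2 (by omega))
        (st_skew' n (iv+1) jv hA2 hB1 (by omega))
        (st_skew' n (iv+1) (jv+1) hA2 hB2 (by omega)))
  | csq i =>
    rw [map_mul, map_one, PsiHom_dg]
    exact st_cc n i
  | cskew i j hij =>
    rw [map_mul, map_neg, map_mul, PsiHom_dg, PsiHom_dg]
    exact st_skew n i j hij
  | sc1 i h h1 h2 =>
    rw [map_mul, map_mul, PsiHom_sg, PsiHom_dg, PsiHom_dg]
    simp only [PsiMap]
    rw [smul_mul_assoc, mul_smul_comm]
    congr 1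
    exact word_sc1 (st_cc n _) (st_cc n _)
      (st_skew' n (i+1) i h2 h1 (by omega))
      (flip_anti (st_mix n ⟨i,h⟩ ⟨i,h1⟩))
      (flip_anti (st_mix n ⟨i,h⟩ ⟨i+1,h2⟩))
  | sc2 i h h1 h2 =>
    rw [map_mul, map_mul, PsiHom_sg, PsiHom_dg, PsiHom_dg]
    simp only [PsiMap]
    rw [smul_mul_assoc, mul_smul_comm]
    congr 1
    exact word_sc2 (st_cc n _) (st_cc n _)
      (st_skew' n (i+1) i h2 h1 (by omega))
      (flip_anti (st_mix n ⟨i,h⟩ ⟨i,h1⟩))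
      (flip_anti (st_mix n ⟨i,h⟩ ⟨i+1,h2⟩))
  | sc3 i h k hk1 hk2 =>
    obtain ⟨kv, hk⟩ := k
    have hk1' : kv ≠ i := hk1
    have hk2' : kv ≠ i + 1 := hk2
    have hA1 : i < n := by omega
    have hA2 : i + 1 < n := by omega
    rw [map_mul, map_mul, PsiHom_sg, PsiHom_dg]
    simp only [PsiMap]
    rw [smul_mul_assoc, mul_smul_comm]
    congr 1
    exact word_sc3
      (anti_pair (st_skew' n i kv hA1 hk (by omega))
        (st_skew' n (i+1) kv hA2 hk (by omega)))
      (flip_anti (st_mix n ⟨i,h⟩ ⟨kv,hk⟩))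
end Rel2
section Final
variable (n : ℕ)

def PhiAlg : SpinTensor n →ₐ[ℂ] HeckeClifford n :=
  RingQuot.liftAlgHom ℂ ⟨PhiHom n, PhiHom_rel n⟩
def PsiAlg : HeckeClifford n →ₐ[ℂ] SpinTensor n :=
  RingQuot.liftAlgHom ℂ ⟨PsiHom n, PsiHom_rel n⟩

lemma PhiAlg_stT (j : Fin (n-1)) : PhiAlg n (stT n j) = PhiMap n (Sum.inl j) := by
  rw [PhiAlg, stT, RingQuot.liftAlgHom_mkAlgHom_apply, PhiHom_tg]
lemma PhiAlg_stC (i : Fin n) : PhiAlg n (stC n i) = hcC n i := by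
  rw [PhiAlg, stC, RingQuot.liftAlgHom_mkAlgHom_apply, PhiHom_cg]
lemma PsiAlg_hcS (j : Fin (n-1)) : PsiAlg n (hcS n j) = PsiMap n (Sum.inl j) := by
  rw [PsiAlg, hcS, RingQuot.liftAlgHom_mkAlgHom_apply, PsiHom_sg]
lemma PsiAlg_hcC (i : Fin n) : PsiAlg n (hcC n i) = stC n i := by
  rw [PsiAlg, hcC, RingQuot.liftAlgHom_mkAlgHom_apply, PsiHom_dg]

lemma comp1 : (PhiAlg n).comp (PsiAlg n) = AlgHom.id ℂ (HeckeClifford n) := by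
  apply RingQuot.ringQuot_ext'
  apply FreeAlgebra.hom_ext
  funext x
  rcases x with j | i
  · show PhiAlg n (PsiAlg n (hcS n j)) = hcS n j
    obtain ⟨jv, hj⟩ := j
    have h1 : jv < n := by omega
    have h2 : jv + 1 < n := by omega
    rw [PsiAlg_hcS]
    simp only [PsiMap]
    rw [map_smul, map_mul, map_sub, PhiAlg_stT, PhiAlg_stC, PhiAlg_stC]
    simp only [PhiMap]
    exact smul_smul_word _ _ _ _ (hcA_sq n jv h1 h2) scalar4
  · show PhiAlg n (PsiAlg n (hcC n i)) = hcC n i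
    rw [PsiAlg_hcC, PhiAlg_stC]

lemma comp2 : (PsiAlg n).comp (PhiAlg n) = AlgHom.id ℂ (SpinTensor n) := by
  apply RingQuot.ringQuot_ext'
  apply FreeAlgebra.hom_ext
  funext x
  rcases x with j | i
  · show PsiAlg n (PhiAlg n (stT n j)) = stT n j
    obtain ⟨jv, hj⟩ := j
    have h1 : jv < n := by omega
    have h2 : jv + 1 < n := by omega
    rw [PhiAlg_stT]
    simp only [PhiMap]
    rw [map_smul, map_mul, map_sub, PsiAlg_hcS, PsiAlg_hcC, PsiAlg_hcC]
    simp only [PsiMap]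
    exact smul_smul_word _ _ _ _ (stA_sq n jv h1 h2) scalar3
  · show PsiAlg n (PhiAlg n (stC n i)) = stC n i
    rw [PhiAlg_stC, PsiAlg_hcC]

end Final

/-- for `n ≥ 1` there is an isomorphism of superalgebras
`ℂS_n⁻ ⊗ Cl_n ≅ Hc_n` determined by `1 ⊗ c_i ↦ c_i` and
`t_j ⊗ 1 ↦ (1/√(-2)) s_j (c_j - c_{j+1})`.  Being a superalgebra isomorphism is
expressed by saying that the algebra isomorphism intertwines the parity
involutions of the two superalgebras (the unique algebra automorphisms negating
all the odd generators `t_i, c_i`, resp. negating the `c_i` and fixing the even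
generators `s_i`). -/
theorem spin_tensor_clifford_iso_heckeClifford (n : ℕ) (hn : 1 ≤ n) :
    ∃ Φ : SpinTensor n ≃ₐ[ℂ] HeckeClifford n,
      (∀ i : Fin n, Φ (stC n i) = hcC n i) ∧
      (∀ (j : ℕ) (h : j < n - 1) (h1 : j < n) (h2 : j + 1 < n),
        Φ (stT n ⟨j, h⟩) =
          (sqrtNeg2)⁻¹ • (hcS n ⟨j, h⟩ * (hcC n ⟨j, h1⟩ - hcC n ⟨j+1, h2⟩))) ∧
      (∀ (PA : SpinTensor n ≃ₐ[ℂ] SpinTensor n) (PH : HeckeClifford n ≃ₐ[ℂ] HeckeClifford n),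
        (∀ i, PA (stT n i) = - stT n i) → (∀ i, PA (stC n i) = - stC n i) →
        (∀ i, PH (hcS n i) = hcS n i) → (∀ i, PH (hcC n i) = - hcC n i) →
        ∀ a : SpinTensor n, Φ (PA a) = PH (Φ a)) := by
  refine ⟨AlgEquiv.ofAlgHom (PhiAlg n) (PsiAlg n) (comp1 n) (comp2 n), ?_, ?_, ?_⟩
  · intro i
    show PhiAlg n (stC n i) = hcC n i
    exact PhiAlg_stC n i
  · intro j h h1 h2
    show PhiAlg n (stT n ⟨j, h⟩) = _
    rw [PhiAlg_stT]
    rfl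
  · intro PA PH hPA1 hPA2 hPH1 hPH2 a
    have key : (PhiAlg n).comp PA.toAlgHom = (PH.toAlgHom).comp (PhiAlg n) := by
      apply RingQuot.ringQuot_ext'
      apply FreeAlgebra.hom_ext
      funext x
      rcases x with j | i
      · show PhiAlg n (PA (stT n j)) = PH (PhiAlg n (stT n j))
        rw [hPA1, map_neg, PhiAlg_stT]
        obtain ⟨jv, hjv⟩ := j
        simp only [PhiMap]
        rw [map_smul, map_mul, map_sub, hPH1, hPH2, hPH2]
        rw [show ∀ (u v w : HeckeClifford n), u * (-v - -w) = -(u * (v - w)) from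
          fun u v w => by rw [neg_sub_neg, ← neg_sub v w]; exact mul_neg u (v-w), smul_neg]
      · show PhiAlg n (PA (stC n i)) = PH (PhiAlg n (stC n i))
        rw [hPA2, map_neg, PhiAlg_stC, hPH2]
    calc (PhiAlg n) (PA a) = ((PhiAlg n).comp PA.toAlgHom) a := rfl
      _ = ((PH.toAlgHom).comp (PhiAlg n)) a := by rw [key]
      _ = PH ((PhiAlg n) a) := rfl
end
end

section
/- Let σ ∈ S_n have cycle type α, where α is a partition of n all of whose parts are odd. Then the trace of the ℂ-linear algebra automorphism of the 2ⁿ-dimensional Clifford algebra Cl_n induced by c_i ↦ c_{σ(i)} equals 2^{ℓ(α)}, where ℓ(α) is the number of parts of α. (Equivalently, the character of the basic spin Hc_n-module Cl_n at the split conjugacy class C_α⁺ is 2^{ℓ(α)}.) -/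
noncomputable section

/-- The sum-of-squares quadratic form `Q(v) = Σ_i v_i²` on `ℂⁿ`. -/
def sumSq (n : ℕ) : QuadraticForm ℂ (Fin n → ℂ) :=
  QuadraticMap.pi fun _ : Fin n => QuadraticMap.sq

/-- The Clifford algebra `Cl_n` with generators `c_i` satisfying `c_i² = 1`,
`c_i c_j = -c_j c_i` for `i ≠ j`. -/
abbrev Cl (n : ℕ) : Type := CliffordAlgebra (sumSq n)

/-- The generator `c_i` of `Cl_n`. -/
def cgen (n : ℕ) (i : Fin n) : Cl n := CliffordAlgebra.ι (sumSq n) (Pi.single i 1)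

namespace BSC

variable {n : ℕ}

abbrev M (n : ℕ) := Finset (Fin n) → ℂ

def sgn (i : Fin n) (S : Finset (Fin n)) : ℂ := (-1) ^ (S.filter (· < i)).card

lemma symmDiff_singleton_mem {α : Type*} [DecidableEq α] {S : Finset α} {i : α} (h : i ∈ S) :
    symmDiff S {i} = S.erase i := by
  ext j; simp [Finset.mem_symmDiff]; aesop

lemma symmDiff_singleton_not_mem {α : Type*} [DecidableEq α] {S : Finset α} {i : α} (h : i ∉ S) :
    symmDiff S {i} = insert i S := by
  ext j; simp [Finset.mem_symmDiff]; aesop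

lemma neg_one_pow_symmDiff (T : Finset (Fin n)) (i : Fin n) :
    ((-1 : ℂ)) ^ (symmDiff T {i}).card = -(-1) ^ T.card := by
  by_cases h : i ∈ T
  · rw [symmDiff_singleton_mem h, Finset.card_erase_of_mem h]
    obtain ⟨k, hk⟩ : ∃ k, T.card = k + 1 :=
      ⟨T.card - 1, (Nat.succ_pred_eq_of_pos (Finset.card_pos.2 ⟨i, h⟩)).symm⟩
    rw [hk]; simp [pow_succ]
  · rw [symmDiff_singleton_not_mem h, Finset.card_insert_of_notMem h, pow_succ]
    ring

lemma filter_symmDiff_of_not_lt {S : Finset (Fin n)} {i t : Fin n} (h : ¬ t < i) :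
    (symmDiff S {t}).filter (· < i) = S.filter (· < i) := by
  ext j
  by_cases hj : j < i <;>
    simp only [Finset.mem_filter, Finset.mem_symmDiff, Finset.mem_singleton, hj, and_true,
      and_false, iff_false, not_or]
  have : j ≠ t := fun e => h (e ▸ hj)
  tauto

lemma sgn_symmDiff_self (i : Fin n) (S : Finset (Fin n)) :
    sgn i (symmDiff S {i}) = sgn i S := by
  unfold sgn; rw [filter_symmDiff_of_not_lt (lt_irrefl i)]

lemma sgn_symmDiff_of_not_lt {i t : Fin n} (h : ¬ t < i) (S : Finset (Fin n)) :
    sgn i (symmDiff S {t}) = sgn i S := by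
  unfold sgn; rw [filter_symmDiff_of_not_lt h]

lemma filter_symmDiff_of_lt {S : Finset (Fin n)} {i j : Fin n} (h : i < j) :
    (symmDiff S {i}).filter (· < j) = symmDiff (S.filter (· < j)) {i} := by
  ext t
  by_cases ht : t < j <;>
    simp only [Finset.mem_filter, Finset.mem_symmDiff, Finset.mem_singleton, ht, and_true,
      and_false, iff_false, not_or, false_iff, not_and]
  have : t ≠ i := fun e => ht (e ▸ h)
  tauto

lemma sgn_symmDiff_of_lt {i j : Fin n} (h : i < j) (S : Finset (Fin n)) :
    sgn j (symmDiff S {i}) = -sgn j S := by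
  unfold sgn; rw [filter_symmDiff_of_lt h, neg_one_pow_symmDiff]

/-- The creation/annihilation operator for index `i`. -/
def A (i : Fin n) : Module.End ℂ (M n) where
  toFun f := fun S => sgn i S * f (symmDiff S {i})
  map_add' f g := by funext S; simp [mul_add]
  map_smul' a f := by funext S; simp [smul_eq_mul]; ring

lemma A_apply (i : Fin n) (f : M n) (S : Finset (Fin n)) :
    A i f S = sgn i S * f (symmDiff S {i}) := rfl

lemma A_mul_self (i : Fin n) : A i * A i = 1 := by
  refine LinearMap.ext fun f => funext fun S => ?_
  simp only [Module.End.mul_apply, A_apply, Module.End.one_apply]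
  rw [sgn_symmDiff_self, symmDiff_symmDiff_cancel_right]
  have : sgn i S * sgn i S = 1 := by
    unfold sgn; rw [← pow_add, ← two_mul, pow_mul]; norm_num
  rw [← mul_assoc, this, one_mul]

lemma A_anticomm {i j : Fin n} (h : i ≠ j) : A i * A j = -(A j * A i) := by
  -- WLOG i < j
  wlog hij : i < j generalizing i j
  · have hji : j < i := (h.lt_or_gt).resolve_left hij
    rw [this h.symm hji, neg_neg]
  refine LinearMap.ext fun f => funext fun S => ?_
  simp only [Module.End.mul_apply, A_apply, LinearMap.neg_apply, Pi.neg_apply]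
  rw [sgn_symmDiff_of_lt hij, sgn_symmDiff_of_not_lt (asymm hij)]
  have hset : symmDiff (symmDiff S {i}) {j} = symmDiff (symmDiff S {j}) {i} := by
    rw [symmDiff_assoc, symmDiff_comm ({i} : Finset (Fin n)), ← symmDiff_assoc]
  rw [hset]; ring

lemma A_pair (i j : Fin n) :
    A i * A j + A j * A i = if i = j then (2 : ℂ) • (1 : Module.End ℂ (M n)) else 0 := by
  by_cases h : i = j
  · subst h; rw [A_mul_self, if_pos rfl, two_smul]
  · rw [if_neg h, A_anticomm h, neg_add_cancel]

/-- The linear map defining the Clifford representation. -/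
def fmap : (Fin n → ℂ) →ₗ[ℂ] Module.End ℂ (M n) where
  toFun v := ∑ i, v i • A i
  map_add' v w := by simp [add_smul, Finset.sum_add_distrib]
  map_smul' a v := by simp [Finset.smul_sum, smul_smul]

lemma fmap_cond (v : Fin n → ℂ) :
    fmap v * fmap v = algebraMap ℂ (Module.End ℂ (M n)) (sumSq n v) := by
  have key : fmap v * fmap v + fmap v * fmap v
      = ((2 : ℂ) * sumSq n v) • (1 : Module.End ℂ (M n)) := by
    have expand : fmap v * fmap v = ∑ i, ∑ j, (v i * v j) • (A i * A j) := by
      unfold fmap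
      simp only [LinearMap.coe_mk, AddHom.coe_mk, Finset.sum_mul_sum, smul_mul_smul_comm]
    rw [expand]
    nth_rewrite 2 [Finset.sum_comm]
    rw [← Finset.sum_add_distrib]
    have : ∀ i ∈ Finset.univ, (∑ j, (v i * v j) • (A i * A j) + ∑ j, (v j * v i) • (A j * A i))
        = (2 * v i ^ 2) • (1 : Module.End ℂ (M n)) := by
      intro i _
      rw [← Finset.sum_add_distrib]
      have : ∀ j ∈ Finset.univ, ((v i * v j) • (A i * A j) + (v j * v i) • (A j * A i))
          = if j = i then (2 * v i ^ 2) • (1 : Module.End ℂ (M n)) else 0 := by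
        intro j _
        rw [mul_comm (v j) (v i), ← smul_add, A_pair]
        by_cases h : j = i
        · subst h; simp [smul_smul]; ring_nf
        · rw [if_neg (fun e => h e.symm), if_neg h, smul_zero]
      rw [Finset.sum_congr rfl this, Finset.sum_ite_eq' Finset.univ i, if_pos (Finset.mem_univ i)]
    rw [Finset.sum_congr rfl this, ← Finset.sum_smul]
    congr 1
    have hQ : sumSq n v = ∑ i, v i ^ 2 := by
      simp [sumSq, QuadraticMap.pi_apply, QuadraticMap.sq, sq]
    rw [hQ, Finset.mul_sum]
  have h2 : (2 : ℂ) • (fmap v * fmap v) = (2 : ℂ) • ((sumSq n v) • (1 : Module.End ℂ (M n))) := by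
    rw [two_smul, key, smul_smul]
  have := smul_right_injective (Module.End ℂ (M n)) (two_ne_zero (α := ℂ)) h2
  rw [this, Module.algebraMap_end_eq_smul_id]
  rfl

/-- The representation of `Cl n` on `M n`. -/
def ρ : Cl n →ₐ[ℂ] Module.End ℂ (M n) :=
  CliffordAlgebra.lift (sumSq n) ⟨fmap, fmap_cond⟩

lemma ρ_cgen (i : Fin n) : ρ (cgen n i) = A i := by
  unfold ρ cgen
  rw [CliffordAlgebra.lift_ι_apply]
  unfold fmap
  simp only [LinearMap.coe_mk, AddHom.coe_mk]
  rw [Finset.sum_eq_single i]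
  · simp
  · intro j _ hj; rw [Pi.single_eq_of_ne hj, zero_smul]
  · simp

/-- Applying an element of the Clifford algebra to the vacuum vector `δ_∅`. -/
def φ : Cl n →ₗ[ℂ] M n where
  toFun x := ρ x (Pi.single ∅ 1)
  map_add' x y := by simp
  map_smul' a x := by simp

lemma φ_apply (x : Cl n) : φ x = ρ x (Pi.single ∅ 1) := rfl

/-- Products of generators over a list. -/
def cprod (l : List (Fin n)) : Cl n := (l.map (cgen n)).prod

lemma cprod_nil : cprod (n := n) [] = 1 := rfl

lemma cprod_cons (i : Fin n) (l : List (Fin n)) :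
    cprod (i :: l) = cgen n i * cprod l := by
  unfold cprod; rw [List.map_cons, List.prod_cons]

lemma A_single (i : Fin n) (S : Finset (Fin n)) :
    A i (Pi.single S (1 : ℂ)) = sgn i S • (Pi.single (symmDiff S {i}) 1 : M n) := by
  funext T
  rw [A_apply]
  by_cases h : T = symmDiff S {i}
  · subst h
    rw [symmDiff_symmDiff_cancel_right, sgn_symmDiff_self]
    simp
  · have h2 : symmDiff T {i} ≠ S := by
      intro e
      exact h (by rw [← e, symmDiff_symmDiff_cancel_right])
    rw [Pi.single_eq_of_ne h2, mul_zero, Pi.smul_apply, Pi.single_eq_of_ne h, smul_zero]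

lemma sgn_of_forall_le {i : Fin n} {S : Finset (Fin n)} (h : ∀ j ∈ S, ¬ j < i) :
    sgn i S = 1 := by
  unfold sgn
  rw [Finset.filter_false_of_mem (by exact fun j hj => by simpa using h j hj)]
  simp

lemma φ_cprod_sorted (l : List (Fin n)) (hl : l.Pairwise (· < ·)) :
    φ (cprod l) = Pi.single l.toFinset 1 := by
  induction l with
  | nil => 
    unfold φ cprod
    simp only [List.map_nil, List.prod_nil, LinearMap.coe_mk, AddHom.coe_mk, map_one]
    rfl
  | cons i t ih =>
    have hts : t.Pairwise (· < ·) := hl.of_cons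
    have hlt : ∀ j ∈ t, i < j := fun j hj => List.rel_of_pairwise_cons hl hj
    have step : φ (cprod (i :: t)) = A i (φ (cprod t)) := by
      rw [φ_apply, φ_apply, cprod_cons, map_mul, ρ_cgen]
      rfl
    rw [step, ih hts, A_single]
    have hnm : i ∉ t.toFinset := fun h => lt_irrefl i (hlt i (List.mem_toFinset.1 h))
    rw [sgn_of_forall_le (fun j hj hlt2 => 
      absurd (hlt j (List.mem_toFinset.1 hj)) (asymm hlt2)),
      symmDiff_singleton_not_mem hnm]
    rw [List.toFinset_cons]
    simp


lemma sumSq_apply (v : Fin n → ℂ) : sumSq n v = ∑ i, v i ^ 2 := by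
  simp [sumSq, QuadraticMap.pi_apply, QuadraticMap.sq, sq]

lemma cgen_sq (i : Fin n) : cgen n i * cgen n i = 1 := by
  unfold cgen
  rw [CliffordAlgebra.ι_sq_scalar]
  have : sumSq n (Pi.single i 1) = 1 := by
    rw [sumSq_apply]
    simp [Pi.single_apply]
  rw [this, map_one]

lemma cgen_anticomm {i j : Fin n} (h : i ≠ j) :
    cgen n i * cgen n j = -(cgen n j * cgen n i) := by
  have hpolar : QuadraticMap.polar (sumSq n) (Pi.single i 1) (Pi.single j 1) = 0 := by
    unfold QuadraticMap.polar
    rw [sumSq_apply, sumSq_apply, sumSq_apply]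
    rw [Finset.sum_congr rfl (fun k _ => by
      rw [Pi.add_apply] : ∀ k ∈ Finset.univ,
        ((Pi.single i 1 + Pi.single j 1 : Fin n → ℂ) k) ^ 2
          = ((Pi.single i 1 : Fin n → ℂ) k + (Pi.single j 1 : Fin n → ℂ) k) ^ 2)]
    simp only [Pi.single_apply]
    rw [Finset.sum_congr rfl (fun k _ => by
      by_cases hk : k = i <;> by_cases hk' : k = j <;>
        simp [hk, hk', h, (h.symm : j ≠ i)] <;> first | ring | (exfalso; exact h (hk' ▸ hk))
      : ∀ k ∈ Finset.univ, ((if k = i then (1:ℂ) else 0) + if k = j then 1 else 0) ^ 2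
          = (if k = i then (1:ℂ) else 0) ^ 2 + (if k = j then (1:ℂ) else 0) ^ 2)]
    rw [Finset.sum_add_distrib]
    ring
  have := CliffordAlgebra.ι_mul_ι_add_swap (Q := sumSq n) (Pi.single i 1) (Pi.single j 1)
  rw [hpolar, map_zero] at this
  unfold cgen
  exact eq_neg_of_add_eq_zero_left this

/-- The candidate basis vectors. -/
def bS (S : Finset (Fin n)) : Cl n := cprod (S.sort (· ≤ ·))

lemma φ_bS (S : Finset (Fin n)) : φ (bS S) = Pi.single S 1 := by
  unfold bS
  rw [φ_cprod_sorted _ (List.sortedLT_iff_pairwise.1 (Finset.sortedLT_sort S)), Finset.sort_toFinset]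

lemma cprod_perm {l l' : List (Fin n)} (h : l.Perm l') :
    ∃ ε : ℂ, (ε = 1 ∨ ε = -1) ∧ cprod l = ε • cprod l' := by
  induction h with
  | nil => exact ⟨1, Or.inl rfl, by simp⟩
  | cons x h ih =>
    obtain ⟨ε, hε, he⟩ := ih
    exact ⟨ε, hε, by rw [cprod_cons, he, cprod_cons, mul_smul_comm]⟩
  | swap x y l =>
    by_cases hxy : x = y
    · subst hxy; exact ⟨1, Or.inl rfl, (one_smul _ _).symm⟩
    · refine ⟨-1, Or.inr rfl, ?_⟩
      rw [cprod_cons, cprod_cons, cprod_cons, cprod_cons, ← mul_assoc, ← mul_assoc,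
        cgen_anticomm (Ne.symm hxy)]
      rw [neg_one_smul, neg_mul, mul_assoc]
  | trans h1 h2 ih1 ih2 =>
    obtain ⟨ε1, hε1, he1⟩ := ih1
    obtain ⟨ε2, hε2, he2⟩ := ih2
    refine ⟨ε1 * ε2, ?_, by rw [he1, he2, smul_smul]⟩
    rcases hε1 with rfl | rfl <;> rcases hε2 with rfl | rfl <;> norm_num

lemma cprod_nodup_eq (l : List (Fin n)) (hl : l.Nodup) :
    ∃ ε : ℂ, (ε = 1 ∨ ε = -1) ∧ cprod l = ε • bS l.toFinset := by
  apply cprod_perm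
  rw [← Multiset.coe_eq_coe, Finset.sort_eq]
  show (l : Multiset (Fin n)) = l.toFinset.val
  exact (Multiset.dedup_eq_self.2 (Multiset.coe_nodup.2 hl)).symm

lemma cgen_mul_bS (i : Fin n) (S : Finset (Fin n)) :
    ∃ ε : ℂ, (ε = 1 ∨ ε = -1) ∧ ∃ T : Finset (Fin n), cgen n i * bS S = ε • bS T := by
  by_cases h : i ∈ S
  · have hperm : (S.sort (· ≤ ·)).Perm (i :: (S.erase i).sort (· ≤ ·)) := by
      rw [← Multiset.coe_eq_coe, Finset.sort_eq, ← Multiset.cons_coe, Finset.sort_eq,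
        Finset.erase_val]
      exact (Multiset.cons_erase h).symm
    obtain ⟨ε, hε, he⟩ := cprod_perm hperm
    refine ⟨ε, hε, S.erase i, ?_⟩
    unfold bS
    rw [he, mul_smul_comm, cprod_cons, ← mul_assoc, cgen_sq, one_mul]
  · have hperm : (i :: S.sort (· ≤ ·)).Perm ((insert i S).sort (· ≤ ·)) := by
      rw [← Multiset.coe_eq_coe, Finset.sort_eq]
      show (i ::ₘ ↑(S.sort (· ≤ ·)) : Multiset (Fin n)) = _
      rw [Finset.sort_eq, Finset.insert_val_of_notMem h]
    obtain ⟨ε, hε, he⟩ := cprod_perm hperm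
    refine ⟨ε, hε, insert i S, ?_⟩
    unfold bS
    rw [← he, cprod_cons]


lemma cprod_append (l1 l2 : List (Fin n)) : cprod (l1 ++ l2) = cprod l1 * cprod l2 := by
  unfold cprod; rw [List.map_append, List.prod_append]

lemma cprod_normal (l : List (Fin n)) :
    ∃ ε : ℂ, (ε = 1 ∨ ε = -1) ∧ ∃ T, cprod l = ε • bS T := by
  induction l with
  | nil =>
    refine ⟨1, Or.inl rfl, ∅, ?_⟩
    unfold bS
    rw [cprod_nil, Finset.sort_empty, cprod_nil, one_smul]
  | cons i t ih =>
    obtain ⟨ε, hε, T, he⟩ := ih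
    obtain ⟨ε', hε', T', he'⟩ := cgen_mul_bS i T
    refine ⟨ε * ε', ?_, T', ?_⟩
    · rcases hε with rfl | rfl <;> rcases hε' with rfl | rfl <;> norm_num
    · rw [cprod_cons, he, mul_smul_comm, he', smul_smul]

lemma ι_eq_sum (v : Fin n → ℂ) :
    CliffordAlgebra.ι (sumSq n) v = ∑ i, v i • cgen n i := by
  have h1 : v = ∑ i, v i • (Pi.single i 1 : Fin n → ℂ) := by
    conv_lhs => rw [← Finset.univ_sum_single v]
    exact Finset.sum_congr rfl fun i _ => by rw [← Pi.single_smul, smul_eq_mul, mul_one]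
  conv_lhs => rw [h1]
  rw [map_sum]
  exact Finset.sum_congr rfl fun i _ => by rw [map_smul]; rfl

lemma bS_singleton (i : Fin n) : bS {i} = cgen n i := by
  unfold bS
  rw [Finset.sort_singleton, cprod_cons, cprod_nil, mul_one]

lemma span_bS : Submodule.span ℂ (Set.range (bS (n := n))) = ⊤ := by
  rw [eq_top_iff]
  rintro x -
  induction x using CliffordAlgebra.induction with
  | algebraMap r =>
    have : algebraMap ℂ (Cl n) r = r • bS ∅ := by
      unfold bS
      rw [Finset.sort_empty, cprod_nil, Algebra.algebraMap_eq_smul_one]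
    rw [this]
    exact Submodule.smul_mem _ _ (Submodule.subset_span ⟨∅, rfl⟩)
  | ι v =>
    rw [ι_eq_sum]
    exact Submodule.sum_mem _ fun i _ => Submodule.smul_mem _ _
      (Submodule.subset_span ⟨{i}, bS_singleton i⟩)
  | mul a b ha hb =>
    have h2 : Submodule.span ℂ (Set.range (bS (n := n))) * Submodule.span ℂ (Set.range bS)
        ≤ Submodule.span ℂ (Set.range (bS (n := n))) := by
      rw [Submodule.span_mul_span]
      rw [Submodule.span_le]
      rintro z ⟨x, ⟨S, rfl⟩, y, ⟨T, rfl⟩, rfl⟩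
      have : bS S * bS T = cprod (S.sort (· ≤ ·) ++ T.sort (· ≤ ·)) := (cprod_append _ _).symm
      rw [SetLike.mem_coe]
      show bS S * bS T ∈ Submodule.span ℂ (Set.range bS)
      rw [this]
      obtain ⟨ε, hε, T', he⟩ := cprod_normal (S.sort (· ≤ ·) ++ T.sort (· ≤ ·))
      rw [he]
      exact Submodule.smul_mem _ _ (Submodule.subset_span ⟨T', rfl⟩)
    exact h2 (Submodule.mul_mem_mul ha hb)
  | add a b ha hb => exact Submodule.add_mem _ ha hb

lemma bS_linearIndependent : LinearIndependent ℂ (bS (n := n)) := by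
  apply LinearIndependent.of_comp φ
  have : (⇑φ ∘ bS : Finset (Fin n) → M n) = ⇑(Pi.basisFun ℂ (Finset (Fin n))) := by
    funext S
    rw [Function.comp_apply, φ_bS, Pi.basisFun_apply]
  rw [this]
  exact (Pi.basisFun ℂ (Finset (Fin n))).linearIndependent

/-- The basis of `Cl n` indexed by subsets of `Fin n`. -/
def B : Module.Basis (Finset (Fin n)) ℂ (Cl n) :=
  Module.Basis.mk bS_linearIndependent (by rw [span_bS])

lemma B_apply (S : Finset (Fin n)) : B S = bS S := by rw [B, Module.Basis.mk_apply]

lemma bS_ne_zero (S : Finset (Fin n)) : bS S ≠ 0 := by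
  rw [← B_apply]; exact B.ne_zero S


variable {σ : Equiv.Perm (Fin n)} {g : Cl n ≃ₐ[ℂ] Cl n}

lemma g_bS (hg : ∀ i, g (cgen n i) = cgen n (σ i)) (S : Finset (Fin n)) :
    ∃ ε : ℂ, (ε = 1 ∨ ε = -1) ∧ g (bS S) = ε • bS (S.image σ) := by
  have h1 : g (bS S) = cprod ((S.sort (· ≤ ·)).map σ) := by
    unfold bS cprod
    rw [map_list_prod, List.map_map, List.map_map]
    exact congrArg List.prod (List.map_congr_left fun i _ => hg i)
  have hnd : ((S.sort (· ≤ ·)).map σ).Nodup :=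
    (Finset.sort_nodup S _).map σ.injective
  obtain ⟨ε, hε, he⟩ := cprod_nodup_eq _ hnd
  have hfin : ((S.sort (· ≤ ·)).map σ).toFinset = S.image σ := by
    ext j
    simp [List.mem_toFinset, List.mem_map, Finset.mem_image, Finset.mem_sort]
  rw [hfin] at he
  exact ⟨ε, hε, by rw [h1, he]⟩

lemma iter_mul (k : ℕ) (a b : Cl n) : g^[k] (a * b) = g^[k] a * g^[k] b := by
  induction k generalizing a b with
  | zero => rfl
  | succ k ih =>
    rw [Function.iterate_succ_apply, Function.iterate_succ_apply,
      Function.iterate_succ_apply, map_mul, ih]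

lemma iter_algebraMap (k : ℕ) (r : ℂ) :
    g^[k] (algebraMap ℂ (Cl n) r) = algebraMap ℂ (Cl n) r := by
  induction k with
  | zero => rfl
  | succ k ih => rw [Function.iterate_succ_apply', ih, AlgEquiv.commutes]

lemma iter_cgen (hg : ∀ i, g (cgen n i) = cgen n (σ i)) (k : ℕ) (i : Fin n) :
    g^[k] (cgen n i) = cgen n ((σ ^ k) i) := by
  induction k with
  | zero => rw [Function.iterate_zero_apply, pow_zero]; rfl
  | succ k ih =>
    rw [Function.iterate_succ_apply', ih, hg, pow_succ']
    rfl

lemma iter_orderOf_eq_id (hg : ∀ i, g (cgen n i) = cgen n (σ i)) (x : Cl n) :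
    g^[orderOf σ] x = x := by
  have hE : ∀ y : Cl n, ((g.toLinearMap : Module.End ℂ (Cl n)) ^ orderOf σ) y
      = g^[orderOf σ] y := fun y => by
    rw [Module.End.pow_apply]
    induction orderOf σ with
    | zero => rfl
    | succ k ih => rw [Function.iterate_succ_apply', Function.iterate_succ_apply', ih]; rfl
  induction x using CliffordAlgebra.induction with
  | algebraMap r => exact iter_algebraMap _ _
  | ι v =>
    rw [ι_eq_sum, ← hE, map_sum]
    have : ∀ i, ((g.toLinearMap : Module.End ℂ (Cl n)) ^ orderOf σ) (v i • cgen n i)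
        = v i • cgen n i := by
      intro i
      rw [map_smul, hE, iter_cgen hg, pow_orderOf_eq_one]
      rfl
    rw [Finset.sum_congr rfl fun i _ => this i]
  | mul a b ha hb => rw [iter_mul, ha, hb]
  | add a b ha hb => rw [← hE, map_add, hE, hE, ha, hb]

lemma orderOf_odd (hodd : ∀ m ∈ σ.cycleType, Odd m) : Odd (orderOf σ) := by
  rw [← Equiv.Perm.lcm_cycleType]
  have hd : σ.cycleType.lcm ∣ σ.cycleType.prod :=
    Multiset.lcm_dvd.2 fun a ha => Multiset.dvd_prod ha
  have hp : Odd σ.cycleType.prod := by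
    revert hodd
    refine Multiset.induction_on σ.cycleType (fun _ => ?_) fun a s ih h => ?_
    · simp [Multiset.prod_zero]
    · rw [Multiset.prod_cons]
      exact (h a (Multiset.mem_cons_self a s)).mul
        (ih fun m hm => h m (Multiset.mem_cons_of_mem hm))
  rw [← Nat.not_even_iff_odd] at hp ⊢
  intro h2
  exact hp (even_iff_two_dvd.2 ((even_iff_two_dvd.1 h2).trans hd))

lemma eps_eq_one (hg : ∀ i, g (cgen n i) = cgen n (σ i))
    (hodd : ∀ m ∈ σ.cycleType, Odd m) {S : Finset (Fin n)} (hS : S.image σ = S)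
    {ε : ℂ} (hε : ε = 1 ∨ ε = -1) (he : g (bS S) = ε • bS S) : ε = 1 := by
  have hiter : ∀ k : ℕ, g^[k] (bS S) = ε ^ k • bS S := by
    intro k
    induction k with
    | zero => simp
    | succ k ih =>
      rw [Function.iterate_succ_apply', ih, map_smul, he, smul_smul, pow_succ, mul_comm]
  have h1 : ε ^ orderOf σ • bS S = bS S := by
    rw [← hiter, iter_orderOf_eq_id hg]
  have h2 : ε ^ orderOf σ = 1 := by
    by_contra hne
    have := sub_smul (ε ^ orderOf σ) 1 (bS S)
    rw [h1, one_smul, sub_self] at this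
    rcases smul_eq_zero.1 this with h | h
    · exact hne (sub_eq_zero.1 h)
    · exact bS_ne_zero S h
  rcases hε with rfl | rfl
  · rfl
  · exfalso
    rw [(orderOf_odd hodd).neg_one_pow] at h2
    norm_num at h2


lemma trace_eq_card (hg : ∀ i, g (cgen n i) = cgen n (σ i))
    (hodd : ∀ m ∈ σ.cycleType, Odd m) :
    LinearMap.trace ℂ (Cl n) g.toLinearMap
      = ((Finset.univ.filter fun S : Finset (Fin n) => S.image σ = S).card : ℂ) := by
  classical
  rw [LinearMap.trace_eq_matrix_trace ℂ B, Matrix.trace]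
  have hdiag : ∀ S : Finset (Fin n),
      (LinearMap.toMatrix B B g.toLinearMap).diag S
        = if S.image σ = S then (1 : ℂ) else 0 := by
    intro S
    rw [Matrix.diag_apply, LinearMap.toMatrix_apply]
    obtain ⟨ε, hε, he⟩ := g_bS hg S
    rw [B_apply, AlgEquiv.toLinearMap_apply, he, map_smul]
    by_cases hinv : S.image σ = S
    · rw [if_pos hinv, hinv, ← B_apply, B.repr_self]
      have : ε = 1 := eps_eq_one hg hodd hinv hε (by rw [he, hinv])
      rw [this]
      simp
    · rw [if_neg hinv, ← B_apply, B.repr_self]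
      rw [Finsupp.smul_apply, Finsupp.single_apply, if_neg hinv, smul_zero]
  rw [Finset.sum_congr rfl fun S _ => hdiag S, Finset.sum_boole]

lemma mem_image_iff_of_invariant {S : Finset (Fin n)} (h : S.image σ = S) (i : Fin n) :
    i ∈ S ↔ σ i ∈ S := by
  constructor
  · intro hi
    rw [← h]
    exact Finset.mem_image_of_mem σ hi
  · intro hi
    rw [← h] at hi
    obtain ⟨j, hj, hji⟩ := Finset.mem_image.1 hi
    rwa [← σ.injective hji]

lemma zpow_mem_of_invariant {S : Finset (Fin n)} (h : S.image σ = S) (k : ℤ)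
    {i : Fin n} (hi : i ∈ S) : (σ ^ k) i ∈ S := by
  induction k using Int.induction_on generalizing i with
  | zero => simpa using hi
  | succ k ih =>
    have : (σ ^ ((k : ℤ) + 1)) i = (σ ^ (k : ℤ)) (σ i) := by
      rw [zpow_add_one]
      rfl
    rw [this]
    exact ih ((mem_image_iff_of_invariant h i).1 hi)
  | pred k ih =>
    have : (σ ^ (-(k : ℤ) - 1)) i = (σ ^ (-(k : ℤ))) (σ⁻¹ i) := by
      rw [zpow_sub_one]
      rfl
    rw [this]
    have hσi : σ⁻¹ i ∈ S := by
      have := (mem_image_iff_of_invariant h (σ⁻¹ i)).2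
      rw [show σ (σ⁻¹ i) = i from (Equiv.eq_symm_apply σ).mp rfl] at this
      exact this hi
    exact ih hσi

lemma invariant_iff {S : Finset (Fin n)} :
    S.image σ = S ↔ ∀ i ∈ S, σ i ∈ S := by
  constructor
  · intro h i hi
    exact (mem_image_iff_of_invariant h i).1 hi
  · intro h
    apply Finset.eq_of_subset_of_card_le
    · intro j hj
      obtain ⟨i, hi, rfl⟩ := Finset.mem_image.1 hj
      exact h i hi
    · rw [Finset.card_image_of_injective S σ.injective]

lemma support_subset_of_mem_factors {c : Equiv.Perm (Fin n)}
    (hc : c ∈ σ.cycleFactorsFinset) : c.support ⊆ σ.support := by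
  intro a ha
  rw [Equiv.Perm.mem_support]
  rw [← (Equiv.Perm.mem_cycleFactorsFinset_iff.1 hc).2 a ha]
  exact Equiv.Perm.mem_support.1 ha

/-- Union of cycles in `C` and fixed points in `T`. -/
def U (C : Finset ↥σ.cycleFactorsFinset) (T : Finset ↥(σ.supportᶜ)) : Finset (Fin n) :=
  (C.biUnion fun c => (c : Equiv.Perm (Fin n)).support)
    ∪ T.map (Function.Embedding.subtype _)

lemma mem_U {C : Finset ↥σ.cycleFactorsFinset} {T : Finset ↥(σ.supportᶜ)} {i : Fin n} :
    i ∈ U C T ↔ (∃ c ∈ C, i ∈ (c : Equiv.Perm (Fin n)).support) ∨ ∃ t ∈ T, (t : Fin n) = i := by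
  unfold U
  simp [Finset.mem_union, Finset.mem_biUnion, Finset.mem_map, Function.Embedding.coe_subtype]

lemma U_invariant (C : Finset ↥σ.cycleFactorsFinset) (T : Finset ↥(σ.supportᶜ)) :
    (U C T).image σ = U C T := by
  rw [invariant_iff]
  intro i hi
  rcases mem_U.1 hi with ⟨c, hc, hic⟩ | ⟨t, ht, rfl⟩
  · refine mem_U.2 (Or.inl ⟨c, hc, ?_⟩)
    have h2 := (Equiv.Perm.mem_cycleFactorsFinset_iff.1 c.2).2 i hic
    rw [← h2]
    exact Equiv.Perm.apply_mem_support.2 hic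
  · have : σ (t : Fin n) = t := by
      have := t.2
      rw [Finset.mem_compl, Equiv.Perm.notMem_support] at this
      exact this
    rw [this]
    exact hi

lemma counting (σ : Equiv.Perm (Fin n)) :
    (Finset.univ.filter fun S : Finset (Fin n) => S.image σ = S).card
      = 2 ^ (Multiset.card σ.cycleType + (n - σ.support.card)) := by
  classical
  have key : Fintype.card {S : Finset (Fin n) // S.image σ = S}
      = Fintype.card (Finset ↥σ.cycleFactorsFinset × Finset ↥(σ.supportᶜ)) := by
    apply Fintype.card_congr
    refine
      { toFun := fun S =>
          (Finset.univ.filter fun c => (c : Equiv.Perm (Fin n)).support ⊆ S.1,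
           Finset.univ.filter fun t => (t : Fin n) ∈ S.1)
        invFun := fun p => ⟨U p.1 p.2, U_invariant p.1 p.2⟩
        left_inv := ?_
        right_inv := ?_ }
    · rintro ⟨S, hS⟩
      ext i
      simp only [Finset.mem_coe]
      rw [mem_U]
      constructor
      · rintro (⟨c, hc, hic⟩ | ⟨t, ht, rfl⟩)
        · exact (Finset.mem_filter.1 hc).2 hic
        · exact (Finset.mem_filter.1 ht).2
      · intro hi
        by_cases hsupp : i ∈ σ.support
        · left
          refine ⟨⟨σ.cycleOf i, Equiv.Perm.cycleOf_mem_cycleFactorsFinset_iff.2 hsupp⟩,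
            Finset.mem_filter.2 ⟨Finset.mem_univ _, ?_⟩, ?_⟩
          · intro j hj
            obtain ⟨⟨k, hk⟩, -⟩ := Equiv.Perm.mem_support_cycleOf_iff.1 hj
            rw [← hk]
            exact zpow_mem_of_invariant hS k hi
          · exact Equiv.Perm.mem_support_cycleOf_iff.2 ⟨Equiv.Perm.SameCycle.refl _ _, hsupp⟩
        · right
          exact ⟨⟨i, Finset.mem_compl.2 hsupp⟩,
            Finset.mem_filter.2 ⟨Finset.mem_univ _, hi⟩, rfl⟩
    · rintro ⟨C, T⟩
      have hTpart : ∀ t : ↥(σ.supportᶜ), (t : Fin n) ∈ U C T ↔ t ∈ T := by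
        intro t
        rw [mem_U]
        constructor
        · rintro (⟨c, hc, htc⟩ | ⟨t', ht', he⟩)
          · exfalso
            have h1 := support_subset_of_mem_factors c.2 htc
            have h2 := t.2
            rw [Finset.mem_compl] at h2
            exact h2 h1
          · rwa [← Subtype.ext he]
        · intro ht
          exact Or.inr ⟨t, ht, rfl⟩
      have hCpart : ∀ c : ↥σ.cycleFactorsFinset,
          (c : Equiv.Perm (Fin n)).support ⊆ U C T ↔ c ∈ C := by
        intro c
        constructor
        · intro hsub
          have hcyc : (c : Equiv.Perm (Fin n)).IsCycle :=
            (Equiv.Perm.mem_cycleFactorsFinset_iff.1 c.2).1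
          obtain ⟨a, ha⟩ := hcyc.nonempty_support
          rcases mem_U.1 (hsub ha) with ⟨c', hc', hac'⟩ | ⟨t, ht, he⟩
          · have e1 : (c : Equiv.Perm (Fin n)) = σ.cycleOf a :=
              Equiv.Perm.cycle_is_cycleOf ha c.2
            have e2 : (c' : Equiv.Perm (Fin n)) = σ.cycleOf a :=
              Equiv.Perm.cycle_is_cycleOf hac' c'.2
            have : c = c' := Subtype.ext (e1.trans e2.symm)
            rwa [this]
          · exfalso
            have h1 := support_subset_of_mem_factors c.2 ha
            have h2 := t.2
            rw [Finset.mem_compl] at h2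
            rw [he] at h2
            exact h2 h1
        · intro hc
          intro a ha
          exact mem_U.2 (Or.inl ⟨c, hc, ha⟩)
      ext x
      · simp only [Finset.mem_filter, Finset.mem_univ, true_and]
        exact hCpart x
      · simp only [Finset.mem_filter, Finset.mem_univ, true_and]
        exact hTpart x
  rw [← Fintype.card_subtype, key, Fintype.card_prod, Fintype.card_finset, Fintype.card_finset,
    Fintype.card_coe, Fintype.card_coe, ← pow_add]
  congr 1
  rw [Equiv.Perm.cycleType_def, Multiset.card_map]
  congr 1
  rw [Finset.card_compl, Fintype.card_fin]

end BSC

/-- if `σ ∈ S_n` has cycle type `α` with all parts odd, then the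
trace of the algebra automorphism of the `2ⁿ`-dimensional Clifford algebra
`Cl_n` induced by `c_i ↦ c_{σ(i)}` equals `2^{ℓ(α)}`, where `ℓ(α)` is the
number of parts of `α` (the full cycle type including the fixed points of `σ`,
whose number of parts is `|cycleType σ| + #fixed points`). -/
theorem basic_spin_character (n : ℕ) (σ : Equiv.Perm (Fin n))
    (hodd : ∀ m ∈ σ.cycleType, Odd m)
    (g : Cl n ≃ₐ[ℂ] Cl n) (hg : ∀ i, g (cgen n i) = cgen n (σ i)) :
    LinearMap.trace ℂ (Cl n) g.toLinearMap =
      (2 : ℂ) ^ (Multiset.card σ.cycleType + (n - σ.support.card)) := by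
  rw [BSC.trace_eq_card hg hodd, BSC.counting σ]
  norm_cast

end
end

section
/- The map Θ sending a standard skew shifted tableau T of size n to its content vector c(T) = (c(T₁),…,c(T_n)) defines a canonical bijection between the set F(n) of standard skew shifted tableaux of size n (two tableaux being identified when there is a content-preserving correspondence of their cells matching the entries) and the set W′(n) of sequences (i₁,…,i_n) ∈ ℤ_{≥0}ⁿ satisfying: (a) if i_k = i_ℓ = 0 with k < ℓ, then 1 ∈ {i_{k+1},…,i_{ℓ−1}}; and (b) if i_k = i_ℓ = a ≥ 1 with k < ℓ, then both a−1 and a+1 belong to {i_{k+1},…,i_{ℓ−1}}. -/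
open Classical

noncomputable section

/-- Cells (0-indexed) of the shifted diagram `ξ*` of a strict partition `ξ`
(given as a strictly decreasing list):
`ξ* = {(i,j) : 0 ≤ i < ℓ, i ≤ j ≤ ξ_i + i - 1}`. -/
def shiftedCells (l : List ℕ) : Finset (ℕ × ℕ) :=
  (Finset.range l.length).biUnion fun a => (Finset.range (l.getD a 0)).image fun j => (a, a + j)

/-- A standard skew shifted tableau of size `n`: a pair of strict partitions
`ν ⊆ ξ` together with a bijective filling of the cells of the skew shifted
diagram `ξ/ν = ξ* \ ν*` by `1, 2, …, n` (here `pos k` is the cell containing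
the entry `k+1`), whose entries strictly increase from left to right along each
row and from top to bottom down each column. -/
structure SSST (n : ℕ) where
  xi : List ℕ
  nu : List ℕ
  xi_sorted : xi.Pairwise (· > ·)
  xi_pos : ∀ x ∈ xi, 0 < x
  nu_sorted : nu.Pairwise (· > ·)
  nu_pos : ∀ x ∈ nu, 0 < x
  sub_len : nu.length ≤ xi.length
  sub : ∀ i, nu.getD i 0 ≤ xi.getD i 0
  pos : Fin n → ℕ × ℕ
  mem : ∀ k, pos k ∈ shiftedCells xi \ shiftedCells nu
  inj : Function.Injective pos
  surj : ∀ c ∈ shiftedCells xi \ shiftedCells nu, ∃ k, pos k = c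
  row : ∀ k l : Fin n, (pos l).1 = (pos k).1 → (pos l).2 = (pos k).2 + 1 → k < l
  col : ∀ k l : Fin n, (pos l).1 = (pos k).1 + 1 → (pos l).2 = (pos k).2 → k < l

/-- The content vector `c(T) = (c(T₁),…,c(T_n))` of a standard skew shifted
tableau, where `c(T_k) = j - i` is the content of the cell containing `k`
(which is nonnegative for (skew) shifted diagrams). -/
def contentVec {n : ℕ} (T : SSST n) : Fin n → ℕ :=
  fun k => (T.pos k).2 - (T.pos k).1

/-- The defining conditions of the set `W′(n)`. -/
def WCond {n : ℕ} (v : Fin n → ℕ) : Prop :=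
  (∀ k l : Fin n, k < l → v k = 0 → v l = 0 →
    ∃ m : Fin n, k < m ∧ m < l ∧ v m = 1) ∧
  (∀ k l : Fin n, k < l → 1 ≤ v k → v k = v l →
    (∃ m : Fin n, k < m ∧ m < l ∧ v m + 1 = v k) ∧
    (∃ m : Fin n, k < m ∧ m < l ∧ v m = v k + 1))

/-- Two standard skew shifted tableaux are identified when there is a
content-preserving correspondence of their cells matching the entries, i.e.
exactly when they have the same content vector. -/
def tabSetoid (n : ℕ) : Setoid (SSST n) :=
  ⟨fun T T' => contentVec T = contentVec T',
    ⟨fun _ => rfl, fun h => h.symm, fun h h' => h.trans h'⟩⟩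


lemma mem_shiftedCells_iff (l : List ℕ) (x y : ℕ) :
    (x, y) ∈ shiftedCells l ↔ x ≤ y ∧ y - x < l.getD x 0 := by
  unfold shiftedCells
  simp only [Finset.mem_biUnion, Finset.mem_range, Finset.mem_image, Prod.mk.injEq]
  constructor
  · rintro ⟨a, ha, j, hj, rfl, rfl⟩
    exact ⟨Nat.le_add_right _ _, by omega⟩
  · rintro ⟨hxy, h⟩
    have hx : x < l.length := by
      by_contra hc
      rw [List.getD_eq_default _ _ (by omega)] at h
      omega
    exact ⟨x, hx, y - x, h, rfl, by omega⟩

lemma getD_add_le (l : List ℕ) (hs : l.Pairwise (· > ·)) (x d : ℕ)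
    (hx : 0 < l.getD (x + d) 0) : l.getD (x + d) 0 + d ≤ l.getD x 0 := by
  induction d with
  | zero => simpa using hx
  | succ d ih =>
    have e : x + (d+1) = x + d + 1 := by omega
    rw [e] at hx ⊢
    have hlen : x + d + 1 < l.length := by
      by_contra hc
      rw [List.getD_eq_default _ _ (by omega)] at hx
      omega
    have h1 : l.getD (x + d + 1) 0 < l.getD (x + d) 0 := by
      rw [List.getD_eq_getElem _ _ hlen, List.getD_eq_getElem _ _ (by omega)]
      exact List.pairwise_iff_getElem.1 hs _ _ _ _ (by omega)
    have := ih (by omega)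
    omega

lemma getD_anti (l : List ℕ) (hs : l.Pairwise (· > ·)) {x y : ℕ} (hxy : x ≤ y) :
    l.getD y 0 ≤ l.getD x 0 := by
  rcases Nat.eq_zero_or_pos (l.getD y 0) with h | h
  · omega
  · have := getD_add_le l hs x (y - x) (by rwa [show x + (y-x) = y by omega])
    rw [show x + (y-x) = y by omega] at this
    omega

section Shape

variable (μ : ℕ → ℕ) (M : ℕ)

def shapeList : List ℕ :=
  (List.range (μ 0)).map fun i => ((Finset.range (M + 1)).filter fun b => i < μ b).card

variable (anti : ∀ a b : ℕ, a ≤ b → μ b ≤ μ a)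
  (step : ∀ a, μ a ≤ μ (a + 1) + 1)
  (vanish : ∀ b, M < b → μ b = 0)

include anti in
lemma shapeList_getD (x : ℕ) :
    (shapeList μ M).getD x 0 = ((Finset.range (M + 1)).filter fun b => x < μ b).card := by
  rcases lt_or_ge x (μ 0) with h | h
  · have hlen : x < (shapeList μ M).length := by simp [shapeList, h]
    rw [List.getD_eq_getElem _ _ hlen]
    simp [shapeList]
  · rw [List.getD_eq_default _ _ (by simp [shapeList]; omega)]
    symm
    rw [Finset.card_eq_zero, Finset.filter_eq_empty_iff]
    intro b _
    have := anti 0 b (Nat.zero_le _)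
    omega

include anti vanish in
lemma shapeList_gt_iff (x a : ℕ) :
    a < (shapeList μ M).getD x 0 ↔ x < μ a := by
  rw [shapeList_getD μ M anti]
  constructor
  · intro h
    by_contra hc
    have hsub : ((Finset.range (M + 1)).filter fun b => x < μ b) ⊆ Finset.range a := by
      intro b hb
      simp only [Finset.mem_filter, Finset.mem_range] at hb ⊢
      by_contra hba
      have := anti a b (by omega)
      omega
    have := Finset.card_le_card hsub
    simp at this
    omega
  · intro h
    have haM : a ≤ M := by
      by_contra hc
      rw [vanish a (by omega)] at h
      omega
    have hsub : Finset.range (a + 1) ⊆ (Finset.range (M + 1)).filter fun b => x < μ b := by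
      intro b hb
      simp only [Finset.mem_range] at hb
      simp only [Finset.mem_filter, Finset.mem_range]
      have := anti b a (by omega)
      omega
    have := Finset.card_le_card hsub
    simp at this
    omega

include anti step vanish in
lemma shapeList_sorted : (shapeList μ M).Pairwise (· > ·) := by
  rw [List.pairwise_iff_getElem]
  intro i j hi hj hij
  simp only [shapeList, List.getElem_map, List.getElem_range] at *
  have hlen : (shapeList μ M).length = μ 0 := by simp [shapeList]
  simp only [shapeList, List.length_map, List.length_range] at hi hj
  -- goal : card filter j < card filter i
  apply Finset.card_lt_card
  constructor
  · intro b hb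
    simp only [Finset.mem_filter] at hb ⊢
    exact ⟨hb.1, by omega⟩
  · intro hsub
    -- find b with μ b = j, it is in filter i not filter j
    have hne : ∃ b, μ b ≤ j := ⟨M + 1, by rw [vanish _ (by omega)]; omega⟩
    set b0 := sInf {b | μ b ≤ j} with hb0
    have hb0mem : μ b0 ≤ j := Nat.sInf_mem hne
    have hb0pos : 0 < b0 := by
      rcases Nat.eq_zero_or_pos b0 with h | h
      · rw [h] at hb0mem; omega
      · exact h
    have hprev' : (b0 - 1) ∉ {b | μ b ≤ j} := Nat.notMem_of_lt_sInf (by omega)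
    have hprev : ¬ (μ (b0 - 1) ≤ j) := by simpa using hprev'
    have hstep := step (b0 - 1)
    rw [show b0 - 1 + 1 = b0 by omega] at hstep
    have hval : μ b0 = j := by omega
    have hb0M : b0 ≤ M := by
      by_contra hc
      rw [vanish _ (by omega)] at hval
      omega
    have : b0 ∈ (Finset.range (M + 1)).filter fun b => j < μ b :=
      hsub (by simp only [Finset.mem_filter, Finset.mem_range]; omega)
    simp only [Finset.mem_filter] at this
    omega

omit anti step vanish in
lemma shapeList_pos : ∀ z ∈ shapeList μ M, 0 < z := by
  intro z hz
  simp only [shapeList, List.mem_map, List.mem_range] at hz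
  obtain ⟨i, hi, rfl⟩ := hz
  rw [Finset.card_pos]
  exact ⟨0, by simp only [Finset.mem_filter, Finset.mem_range]; omega⟩

lemma shapeList_length : (shapeList μ M).length = μ 0 := by simp [shapeList]

include anti vanish in
lemma mem_shape_iff (x y : ℕ) :
    (x, y) ∈ shiftedCells (shapeList μ M) ↔ x ≤ y ∧ x < μ (y - x) := by
  rw [mem_shiftedCells_iff, shapeList_gt_iff μ M anti vanish]

end Shape

section Occ

variable {n : ℕ} (v : Fin n → ℕ)

def cnt (b : ℕ) : ℕ := (Finset.univ.filter fun k : Fin n => v k = b).card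

def occ (k : Fin n) : ℕ := (Finset.univ.filter fun m : Fin n => m < k ∧ v m = v k).card

lemma occ_lt_cnt (k : Fin n) : occ v k < cnt v (v k) := by
  apply Finset.card_lt_card
  constructor
  · intro m hm
    simp only [Finset.mem_filter, Finset.mem_univ, true_and] at hm ⊢
    exact hm.2
  · intro hsub
    have := hsub (by simp : k ∈ Finset.univ.filter fun m : Fin n => v m = v k)
    simp at this

lemma occ_lt_occ {k l : Fin n} (hv : v k = v l) (h : k < l) : occ v k < occ v l := by
  apply Finset.card_lt_card
  constructor
  · intro m hm
    simp only [Finset.mem_filter, Finset.mem_univ, true_and] at hm ⊢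
    exact ⟨hm.1.trans h, hm.2.trans hv⟩
  · intro hsub
    have := hsub (by simp [h, hv.symm] :
      k ∈ Finset.univ.filter fun m : Fin n => m < l ∧ v m = v l)
    simp at this

lemma le_of_occ_le {k l : Fin n} (hv : v k = v l) (h : occ v k ≤ occ v l) : k ≤ l := by
  by_contra hc
  have := occ_lt_occ v hv.symm (lt_of_not_ge hc)
  omega

lemma lt_of_occ_lt {k l : Fin n} (hv : v k = v l) (h : occ v k < occ v l) : k < l := by
  rcases lt_or_eq_of_le (le_of_occ_le v hv (le_of_lt h)) with h' | h'
  · exact h'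
  · subst h'; omega

lemma eq_of_occ_eq {k l : Fin n} (hv : v k = v l) (h : occ v k = occ v l) : k = l :=
  le_antisymm (le_of_occ_le v hv h.le) (le_of_occ_le v hv.symm h.ge)

lemma exists_occ (b t : ℕ) (ht : t < cnt v b) : ∃ k : Fin n, v k = b ∧ occ v k = t := by
  classical
  set F := Finset.univ.filter fun k : Fin n => v k = b with hF
  have himg : F.image (occ v) = Finset.range (cnt v b) := by
    apply Finset.eq_of_subset_of_card_le
    · intro t' ht'
      simp only [Finset.mem_image, hF, Finset.mem_filter, Finset.mem_univ, true_and] at ht'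
      obtain ⟨k, hk, rfl⟩ := ht'
      simp only [Finset.mem_range]
      have := occ_lt_cnt v k
      rwa [hk] at this
    · have hinj : Set.InjOn (occ v) F := by
        intro k hk l hl h
        simp only [hF, Finset.coe_filter, Finset.mem_univ, true_and,
          Set.mem_setOf_eq] at hk hl
        exact eq_of_occ_eq v (hk.trans hl.symm) h
      rw [Finset.card_range, Finset.card_image_of_injOn hinj]
      exact le_rfl
  have : t ∈ F.image (occ v) := by rw [himg]; simpa using ht
  simp only [Finset.mem_image, hF, Finset.mem_filter, Finset.mem_univ, true_and] at this
  obtain ⟨k, hk, hocc⟩ := this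
  exact ⟨k, hk, hocc⟩

lemma cnt_pos (k : Fin n) : 0 < cnt v (v k) := lt_of_le_of_lt (Nat.zero_le _) (occ_lt_cnt v k)

lemma interleave_i (b b' : ℕ)
    (Hb' : ∀ k l : Fin n, k < l → v k = b' → v l = b' → ∃ m, k < m ∧ m < l ∧ v m = b)
    (Hf : ∀ k : Fin n, v k = b' → ∃ m, m < k ∧ v m = b) :
    ∀ t (l : Fin n), v l = b' → occ v l = t → ∃ k, v k = b ∧ occ v k = t ∧ k < l := by
  intro t
  induction t with
  | zero =>
    intro l hl hocc
    obtain ⟨m, hm, hvm⟩ := Hf l hl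
    have hcb : 0 < cnt v b := by have := cnt_pos v m; rwa [hvm] at this
    obtain ⟨k, hk, hk0⟩ := exists_occ v b 0 hcb
    refine ⟨k, hk, hk0, lt_of_le_of_lt ?_ hm⟩
    exact le_of_occ_le v (hk.trans hvm.symm) (by omega)
  | succ t ih =>
    intro l hl hocc
    have hcnt : occ v l < cnt v b' := by have := occ_lt_cnt v l; rwa [hl] at this
    obtain ⟨l', hl', hl'occ⟩ := exists_occ v b' t (by omega)
    have hl'l : l' < l := lt_of_occ_lt v (hl'.trans hl.symm) (by omega)
    obtain ⟨k', hk', hk'occ, hk'l'⟩ := ih l' hl' hl'occ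
    obtain ⟨m, hml', hml, hvm⟩ := Hb' l' l hl'l hl' hl
    have hocc_m : occ v k' < occ v m := occ_lt_occ v (hk'.trans hvm.symm) (hk'l'.trans hml')
    have hcm : occ v m < cnt v b := by have := occ_lt_cnt v m; rwa [hvm] at this
    obtain ⟨k, hk, hkocc⟩ := exists_occ v b (t + 1) (by omega)
    refine ⟨k, hk, hkocc, lt_of_le_of_lt ?_ hml⟩
    exact le_of_occ_le v (hk.trans hvm.symm) (by omega)

lemma interleave_ii (b b' : ℕ)
    (Hb : ∀ k l : Fin n, k < l → v k = b → v l = b → ∃ m, k < m ∧ m < l ∧ v m = b') :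
    ∀ t (l k : Fin n), v l = b' → occ v l = t → v k = b → occ v k = t + 1 → l < k := by
  intro t
  induction t with
  | zero =>
    intro l k hl hlocc hk hkocc
    have hck : occ v k < cnt v b := by have := occ_lt_cnt v k; rwa [hk] at this
    obtain ⟨k0, hk0, hk0occ⟩ := exists_occ v b 0 (by omega)
    have hk0k : k0 < k := lt_of_occ_lt v (hk0.trans hk.symm) (by omega)
    obtain ⟨m, hm1, hm2, hvm⟩ := Hb k0 k hk0k hk0 hk
    refine lt_of_le_of_lt ?_ hm2
    exact le_of_occ_le v (hl.trans hvm.symm) (by omega)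
  | succ t ih =>
    intro l k hl hlocc hk hkocc
    have hck : occ v k < cnt v b := by have := occ_lt_cnt v k; rwa [hk] at this
    obtain ⟨k', hk', hk'occ⟩ := exists_occ v b (t + 1) (by omega)
    have hk'k : k' < k := lt_of_occ_lt v (hk'.trans hk.symm) (by omega)
    obtain ⟨m, hm1, hm2, hvm⟩ := Hb k' k hk'k hk' hk
    rcases le_or_gt (t + 1) (occ v m) with hle | hlt
    · refine lt_of_le_of_lt ?_ hm2
      exact le_of_occ_le v (hl.trans hvm.symm) (by omega)
    · have hcl : occ v l < cnt v b' := by have := occ_lt_cnt v l; rwa [hl] at this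
      obtain ⟨l'', hl'', hl''occ⟩ := exists_occ v b' t (by omega)
      have h1 : m ≤ l'' := le_of_occ_le v (hvm.trans hl''.symm) (by omega)
      have h2 : l'' < k' := ih l'' k' hl'' hl''occ hk' hk'occ
      exact absurd (h1.trans_lt h2) (not_lt.2 hm1.le)

lemma cnt_le_cnt (b b' : ℕ)
    (Hb' : ∀ k l : Fin n, k < l → v k = b' → v l = b' → ∃ m, k < m ∧ m < l ∧ v m = b)
    (Hf : ∀ k : Fin n, v k = b' → ∃ m, m < k ∧ v m = b) :
    cnt v b' ≤ cnt v b := by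
  rcases Nat.eq_zero_or_pos (cnt v b') with h | h
  · omega
  · obtain ⟨l, hl, hlocc⟩ := exists_occ v b' (cnt v b' - 1) (by omega)
    obtain ⟨k, hk, hkocc, _⟩ := interleave_i v b b' Hb' Hf _ l hl hlocc
    have : occ v k < cnt v b := by have := occ_lt_cnt v k; rwa [hk] at this
    omega

lemma cnt_gap (b b' : ℕ)
    (Hb : ∀ k l : Fin n, k < l → v k = b → v l = b → ∃ m, k < m ∧ m < l ∧ v m = b') :
    cnt v b ≤ cnt v b' + 1 := by
  by_contra hc
  push_neg at hc
  have S : ∀ t, t + 1 < cnt v b →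
      ∃ m, v m = b' ∧ t ≤ occ v m ∧ ∀ k, v k = b → occ v k = t + 1 → m < k := by
    intro t
    induction t with
    | zero =>
      intro ht
      obtain ⟨k0, hk0, hk0occ⟩ := exists_occ v b 0 (by omega)
      obtain ⟨k1, hk1, hk1occ⟩ := exists_occ v b 1 (by omega)
      have : k0 < k1 := lt_of_occ_lt v (hk0.trans hk1.symm) (by omega)
      obtain ⟨m, hm1, hm2, hvm⟩ := Hb k0 k1 this hk0 hk1
      refine ⟨m, hvm, Nat.zero_le _, fun k hk hkocc => ?_⟩
      have : k = k1 := eq_of_occ_eq v (hk.trans hk1.symm) (by omega)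
      rwa [this]
    | succ t ih =>
      intro ht
      obtain ⟨m0, hm0, hm0occ, hm0lt⟩ := ih (by omega)
      obtain ⟨k1, hk1, hk1occ⟩ := exists_occ v b (t + 1) (by omega)
      obtain ⟨k2, hk2, hk2occ⟩ := exists_occ v b (t + 2) (by omega)
      have hk12 : k1 < k2 := lt_of_occ_lt v (hk1.trans hk2.symm) (by omega)
      obtain ⟨m, hm1, hm2, hvm⟩ := Hb k1 k2 hk12 hk1 hk2
      have hm0m : m0 < m := lt_trans (hm0lt k1 hk1 hk1occ) hm1
      have : occ v m0 < occ v m := occ_lt_occ v (hm0.trans hvm.symm) hm0m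
      refine ⟨m, hvm, by omega, fun k hk hkocc => ?_⟩
      have : k = k2 := eq_of_occ_eq v (hk.trans hk2.symm) (by omega)
      rwa [this]
  obtain ⟨m, hvm, hge, _⟩ := S (cnt v b - 2) (by omega)
  have : occ v m < cnt v b' := by have := occ_lt_cnt v m; rwa [hvm] at this
  omega

end Occ

section Constr

variable {n : ℕ} (v : Fin n → ℕ)

def Mx : ℕ := Finset.univ.sup v

def dd (a : ℕ) : ℕ :=
  if (0 < cnt v a ∧ ∀ k, v k = a - 1 → ∃ m, m < k ∧ v m = a) then 1 else 0

def rr (a : ℕ) : ℕ := ∑ b ∈ Finset.range (Mx v + 2), if a < b then dd v b else 0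

def mm (a : ℕ) : ℕ := rr v a + cnt v a

lemma dd_succ (a : ℕ) : dd v (a + 1) =
    if (0 < cnt v (a + 1) ∧ ∀ k, v k = a → ∃ m, m < k ∧ v m = a + 1) then 1 else 0 := by
  simp [dd]

lemma cnt_vanish {b : ℕ} (hb : Mx v < b) : cnt v b = 0 := by
  rw [cnt, Finset.card_eq_zero, Finset.filter_eq_empty_iff]
  intro k _
  have : v k ≤ Mx v := Finset.le_sup (Finset.mem_univ k)
  omega

lemma cnt_eq_zero {b : ℕ} (hb : cnt v b = 0) (k : Fin n) : v k ≠ b := by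
  intro h
  have := cnt_pos v k
  rw [h] at this
  omega

lemma dd_le_one (a : ℕ) : dd v a ≤ 1 := by
  rw [dd]; split <;> omega

lemma dd_vanish {b : ℕ} (hb : Mx v < b) : dd v b = if False then 1 else 0 := by
  rw [dd, if_neg]
  · simp
  · rw [cnt_vanish v hb]; simp

lemma rr_succ (a : ℕ) : rr v a = dd v (a + 1) + rr v (a + 1) := by
  rw [rr, rr]
  have h1 : ∀ b ∈ Finset.range (Mx v + 2),
      (if a < b then dd v b else 0) =
      (if b = a + 1 then dd v b else 0) + (if a + 1 < b then dd v b else 0) := by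
    intro b _
    rcases lt_trichotomy b (a + 1) with h | h | h
    · rw [if_neg (by omega), if_neg (by omega), if_neg (by omega)]
    · rw [if_pos (by omega), if_pos h, if_neg (by omega)]; omega
    · rw [if_pos (by omega), if_neg (by omega), if_pos h]; omega
  rw [Finset.sum_congr rfl h1, Finset.sum_add_distrib, Finset.sum_ite_eq' (Finset.range (Mx v + 2))]
  by_cases h : a + 1 ∈ Finset.range (Mx v + 2)
  · rw [if_pos h]
  · rw [if_neg h]
    have : Mx v < a + 1 := by simp only [Finset.mem_range] at h; omega
    rw [dd_vanish v this]
    simp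

lemma rr_vanish {a : ℕ} (ha : Mx v < a) : rr v a = 0 := by
  rw [rr]
  apply Finset.sum_eq_zero
  intro b hb
  simp only [Finset.mem_range] at hb
  rw [if_neg (by omega)]

lemma mm_vanish {a : ℕ} (ha : Mx v < a) : mm v a = 0 := by
  rw [mm, rr_vanish v ha, cnt_vanish v ha]

variable (hv : WCond v)

include hv in
lemma alt1 : ∀ (a : ℕ) (k l : Fin n), k < l → v k = a → v l = a →
    ∃ m, k < m ∧ m < l ∧ v m = a + 1 := by
  intro a k l hkl hk hl
  rcases Nat.eq_zero_or_pos a with rfl | ha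
  · exact hv.1 k l hkl hk hl
  · have := (hv.2 k l hkl (by omega) (hk.trans hl.symm)).2
    obtain ⟨m, h1, h2, h3⟩ := this
    exact ⟨m, h1, h2, by omega⟩

include hv in
lemma alt2 : ∀ (a : ℕ) (k l : Fin n), k < l → v k = a + 1 → v l = a + 1 →
    ∃ m, k < m ∧ m < l ∧ v m = a := by
  intro a k l hkl hk hl
  have := (hv.2 k l hkl (by omega) (hk.trans hl.symm)).1
  obtain ⟨m, h1, h2, h3⟩ := this
  exact ⟨m, h1, h2, by omega⟩

include hv in
lemma cnt_F2 (a : ℕ) : cnt v (a + 1) ≤ dd v (a + 1) + cnt v a := by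
  by_cases h1 : cnt v (a + 1) = 0
  · omega
  by_cases h3 : ∀ k, v k = a → ∃ m, m < k ∧ v m = a + 1
  · rw [dd_succ, if_pos ⟨by omega, h3⟩]
    have := cnt_gap v (a + 1) a (alt2 v hv a)
    omega
  · push_neg at h3
    obtain ⟨k0, hk0, hno⟩ := h3
    have Hf' : ∀ k' : Fin n, v k' = a + 1 → ∃ m, m < k' ∧ v m = a := by
      intro k' hk'
      rcases lt_trichotomy k0 k' with h | h | h
      · exact ⟨k0, h, hk0⟩
      · rw [h] at hk0; omega
      · exact absurd hk' (hno k' h)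
    have := cnt_le_cnt v a (a + 1) (alt2 v hv a) Hf'
    omega

include hv in
lemma cnt_F3 (a : ℕ) : dd v (a + 1) + cnt v a ≤ cnt v (a + 1) + 1 := by
  rw [dd_succ]
  by_cases hd : (0 < cnt v (a + 1) ∧ ∀ k, v k = a → ∃ m, m < k ∧ v m = a + 1)
  · rw [if_pos hd]
    rcases Nat.eq_zero_or_pos (cnt v a) with h | h
    · omega
    · have := cnt_le_cnt v (a + 1) a (alt1 v hv a) hd.2
      omega
  · rw [if_neg hd]
    have := cnt_gap v a (a + 1) (alt1 v hv a)
    omega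

include hv in
lemma mm_anti : ∀ a b : ℕ, a ≤ b → mm v b ≤ mm v a := by
  intro a b hab
  exact antitone_nat_of_succ_le (fun c => by
    have h1 := rr_succ v c
    have h2 := cnt_F2 v hv c
    rw [mm, mm]; omega) hab

include hv in
lemma mm_step : ∀ a : ℕ, mm v a ≤ mm v (a + 1) + 1 := by
  intro a
  have h1 := rr_succ v a
  have h2 := cnt_F3 v hv a
  rw [mm, mm]; omega

lemma rr_anti : ∀ a b : ℕ, a ≤ b → rr v b ≤ rr v a := by
  intro a b hab
  exact antitone_nat_of_succ_le (fun c => by have := rr_succ v c; omega) hab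

lemma rr_step : ∀ a : ℕ, rr v a ≤ rr v (a + 1) + 1 := by
  intro a
  have h1 := rr_succ v a
  have h2 := dd_le_one v (a + 1)
  omega

lemma rr_le_mm (a : ℕ) : rr v a ≤ mm v a := Nat.le_add_right _ _

include hv in
def Tab : SSST n where
  xi := shapeList (mm v) (Mx v)
  nu := shapeList (rr v) (Mx v)
  xi_sorted := shapeList_sorted (mm v) (Mx v) (mm_anti v hv) (mm_step v hv)
    (fun b hb => mm_vanish v hb)
  xi_pos := shapeList_pos (mm v) (Mx v)
  nu_sorted := shapeList_sorted (rr v) (Mx v) (rr_anti v) (rr_step v)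
    (fun b hb => rr_vanish v hb)
  nu_pos := shapeList_pos (rr v) (Mx v)
  sub_len := by
    rw [shapeList_length, shapeList_length]
    exact rr_le_mm v 0
  sub := by
    intro i
    rw [shapeList_getD (rr v) (Mx v) (rr_anti v), shapeList_getD (mm v) (Mx v) (mm_anti v hv)]
    apply Finset.card_le_card
    intro b hb
    simp only [Finset.mem_filter, Finset.mem_range] at hb ⊢
    exact ⟨hb.1, lt_of_lt_of_le hb.2 (rr_le_mm v b)⟩
  pos := fun k => (rr v (v k) + occ v k, rr v (v k) + occ v k + v k)
  mem := by
    intro k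
    rw [Finset.mem_sdiff, mem_shape_iff (mm v) (Mx v) (mm_anti v hv) (fun b hb => mm_vanish v hb),
      mem_shape_iff (rr v) (Mx v) (rr_anti v) (fun b hb => rr_vanish v hb)]
    have he : rr v (v k) + occ v k + v k - (rr v (v k) + occ v k) = v k := by omega
    rw [he]
    have := occ_lt_cnt v k
    refine ⟨⟨by omega, ?_⟩, by omega⟩
    rw [mm]; omega
  inj := by
    intro k l h
    simp only [Prod.mk.injEq] at h
    have hvkl : v k = v l := by omega
    have hocc : occ v k = occ v l := by rw [hvkl] at h; omega
    exact eq_of_occ_eq v hvkl hocc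
  surj := by
    rintro ⟨x, y⟩ hc
    rw [Finset.mem_sdiff, mem_shape_iff (mm v) (Mx v) (mm_anti v hv) (fun b hb => mm_vanish v hb),
      mem_shape_iff (rr v) (Mx v) (rr_anti v) (fun b hb => rr_vanish v hb)] at hc
    obtain ⟨⟨hxy, hxm⟩, hnr⟩ := hc
    have hrle : rr v (y - x) ≤ x := by
      by_contra hcon
      exact hnr ⟨hxy, by omega⟩
    rw [mm] at hxm
    obtain ⟨k, hk, hkocc⟩ := exists_occ v (y - x) (x - rr v (y - x)) (by omega)
    refine ⟨k, ?_⟩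
    show (rr v (v k) + occ v k, rr v (v k) + occ v k + v k) = (x, y)
    rw [hk, hkocc, Prod.mk.injEq]
    omega
  row := by
    intro k l h1 h2
    simp only at h1 h2
    have hvl : v l = v k + 1 := by omega
    have hrr := rr_succ v (v k)
    rw [hvl] at h1
    have hocc : occ v l = occ v k + dd v (v k + 1) := by omega
    by_cases hd : (0 < cnt v (v k + 1) ∧ ∀ k', v k' = v k → ∃ m, m < k' ∧ v m = v k + 1)
    · rw [dd_succ, if_pos hd] at hocc
      exact interleave_ii v (v k + 1) (v k) (alt2 v hv (v k)) (occ v k) k l rfl rfl hvl hocc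
    · rw [dd_succ, if_neg hd] at hocc
      have hc1 : 0 < cnt v (v k + 1) := by
        have := cnt_pos v l; rwa [hvl] at this
      have h3 : ¬ ∀ k', v k' = v k → ∃ m, m < k' ∧ v m = v k + 1 := fun h => hd ⟨hc1, h⟩
      push_neg at h3
      obtain ⟨k0, hk0, hno⟩ := h3
      have Hf' : ∀ k' : Fin n, v k' = v k + 1 → ∃ m, m < k' ∧ v m = v k := by
        intro k' hk'
        rcases lt_trichotomy k0 k' with h | h | h
        · exact ⟨k0, h, hk0⟩
        · rw [h] at hk0; omega
        · exact absurd hk' (hno k' h)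
      obtain ⟨k'', hk''v, hk''occ, hk''l⟩ :=
        interleave_i v (v k) (v k + 1) (alt2 v hv (v k)) Hf' (occ v l) l hvl rfl
      have : k'' = k := eq_of_occ_eq v (by rw [hk''v]) (by omega)
      rwa [this] at hk''l
  col := by
    intro k l h1 h2
    simp only at h1 h2
    have hvk : v k = v l + 1 := by omega
    have hrr := rr_succ v (v l)
    rw [hvk] at h1
    have hocc : occ v l + dd v (v l + 1) = occ v k + 1 := by omega
    by_cases hd : (0 < cnt v (v l + 1) ∧ ∀ k', v k' = v l → ∃ m, m < k' ∧ v m = v l + 1)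
    · rw [dd_succ, if_pos hd] at hocc
      have hocceq : occ v l = occ v k := by omega
      obtain ⟨k'', hk''v, hk''occ, hk''l⟩ :=
        interleave_i v (v l + 1) (v l) (alt1 v hv (v l)) hd.2 (occ v l) l rfl rfl
      have : k'' = k := eq_of_occ_eq v (by rw [hk''v, hvk]) (by omega)
      rwa [this] at hk''l
    · rw [dd_succ, if_neg hd] at hocc
      have hocceq : occ v l = occ v k + 1 := by omega
      exact interleave_ii v (v l) (v l + 1) (alt1 v hv (v l)) (occ v k) k l hvk rfl rfl hocceq

include hv in
lemma Tab_content : contentVec (Tab v hv) = v := by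
  funext k
  simp only [contentVec, Tab]
  omega

end Constr

section Sound

variable {n : ℕ} (T : SSST n)

lemma mem_diff_iff (x y : ℕ) :
    (x, y) ∈ shiftedCells T.xi \ shiftedCells T.nu ↔
      x ≤ y ∧ T.nu.getD x 0 ≤ y - x ∧ y - x < T.xi.getD x 0 := by
  rw [Finset.mem_sdiff, mem_shiftedCells_iff, mem_shiftedCells_iff]
  constructor
  · rintro ⟨⟨h1, h2⟩, h3⟩
    refine ⟨h1, ?_, h2⟩
    by_contra hc
    exact h3 ⟨h1, by omega⟩
  · rintro ⟨h1, h2, h3⟩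
    exact ⟨⟨h1, h3⟩, fun hc => by omega⟩

lemma cells_step {i i' a : ℕ} (hii' : i < i')
    (h1 : (i, i + a) ∈ shiftedCells T.xi \ shiftedCells T.nu)
    (h2 : (i', i' + a) ∈ shiftedCells T.xi \ shiftedCells T.nu) :
    ((i, i + (a + 1)) ∈ shiftedCells T.xi \ shiftedCells T.nu) ∧
    ((i + 1, (i + 1) + a) ∈ shiftedCells T.xi \ shiftedCells T.nu) ∧
    (1 ≤ a → (i + 1, (i + 1) + (a - 1)) ∈ shiftedCells T.xi \ shiftedCells T.nu) := by
  rw [mem_diff_iff] at h1 h2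
  obtain ⟨-, hn1, hx1⟩ := h1
  obtain ⟨-, hn2, hx2⟩ := h2
  rw [show i + a - i = a by omega] at hn1 hx1
  rw [show i' + a - i' = a by omega] at hn2 hx2
  have hxipos : 0 < T.xi.getD i' 0 := by omega
  have hxi1 : a + 1 + (i' - (i + 1)) ≤ T.xi.getD (i + 1) 0 := by
    have := getD_add_le T.xi T.xi_sorted (i + 1) (i' - (i + 1))
      (by rw [show i + 1 + (i' - (i + 1)) = i' by omega]; omega)
    rw [show i + 1 + (i' - (i + 1)) = i' by omega] at this
    omega
  have hxi0 : a + 1 + (i' - i) ≤ T.xi.getD i 0 := by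
    have := getD_add_le T.xi T.xi_sorted i (i' - i)
      (by rw [show i + (i' - i) = i' by omega]; omega)
    rw [show i + (i' - i) = i' by omega] at this
    omega
  have hnu1 : T.nu.getD (i + 1) 0 ≤ T.nu.getD i 0 :=
    getD_anti T.nu T.nu_sorted (by omega)
  refine ⟨?_, ?_, ?_⟩
  · rw [mem_diff_iff, show i + (a + 1) - i = a + 1 by omega]
    refine ⟨by omega, by omega, by omega⟩
  · rw [mem_diff_iff, show i + 1 + a - (i + 1) = a by omega]
    refine ⟨by omega, by omega, by omega⟩
  · intro ha
    rw [mem_diff_iff, show i + 1 + (a - 1) - (i + 1) = a - 1 by omega]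
    have hnu2 : T.nu.getD (i + 1) 0 ≤ a - 1 := by
      rcases Nat.eq_zero_or_pos (T.nu.getD (i + 1) 0) with h | h
      · omega
      · have := getD_add_le T.nu T.nu_sorted i 1 h
        omega
    refine ⟨by omega, by omega, by omega⟩

lemma diag1 (k l : Fin n) (i a : ℕ)
    (hk : T.pos k = (i, i + a)) (hl : T.pos l = (i + 1, (i + 1) + a)) :
    k < l ∧ (∃ m, k < m ∧ m < l ∧ contentVec T m = a + 1) ∧
      (1 ≤ a → ∃ m, k < m ∧ m < l ∧ contentVec T m + 1 = a) := by
  have hmk := T.mem k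
  have hml := T.mem l
  rw [hk] at hmk
  rw [hl] at hml
  obtain ⟨hup, hnext, hdown⟩ := cells_step T (by omega : i < i + 1) hmk hml
  obtain ⟨m1, hm1⟩ := T.surj _ hup
  have hkm1 : k < m1 := T.row k m1 (by rw [hm1, hk]) (by rw [hm1, hk]; omega)
  have hm1l : m1 < l := T.col m1 l (by rw [hm1, hl]) (by rw [hm1, hl]; omega)
  refine ⟨lt_trans hkm1 hm1l, ⟨m1, hkm1, hm1l, ?_⟩, ?_⟩
  · rw [contentVec, hm1]; omega
  · intro ha
    obtain ⟨m2, hm2⟩ := T.surj _ (hdown ha)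
    have hkm2 : k < m2 := T.col k m2 (by rw [hm2, hk]) (by rw [hm2, hk]; omega)
    have hm2l : m2 < l := T.row m2 l (by rw [hm2, hl]) (by rw [hm2, hl]; omega)
    refine ⟨m2, hkm2, hm2l, ?_⟩
    rw [contentVec, hm2]
    simp only
    omega

lemma diag_all : ∀ (d : ℕ) (k l : Fin n) (i a : ℕ),
    T.pos k = (i, i + a) → T.pos l = (i + d + 1, (i + d + 1) + a) →
    k < l ∧ (∃ m, k < m ∧ m < l ∧ contentVec T m = a + 1) ∧
      (1 ≤ a → ∃ m, k < m ∧ m < l ∧ contentVec T m + 1 = a) := by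
  intro d
  induction d with
  | zero =>
    intro k l i a hk hl
    exact diag1 T k l i a hk (by rw [hl])
  | succ d ih =>
    intro k l i a hk hl
    have hmk := T.mem k
    have hml := T.mem l
    rw [hk] at hmk
    rw [hl] at hml
    obtain ⟨-, hnext, -⟩ := cells_step T (by omega : i < i + (d + 1) + 1) hmk hml
    obtain ⟨km, hkm⟩ := T.surj _ hnext
    obtain ⟨h1, hw1, hw2⟩ := diag1 T k km i a hk hkm
    have hkml : km < l ∧ _ := ih km l (i + 1) a hkm
      (by rw [hl]; rw [show i + 1 + d + 1 = i + (d + 1) + 1 by omega])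
    obtain ⟨h2, -⟩ := hkml
    refine ⟨lt_trans h1 h2, ?_, ?_⟩
    · obtain ⟨m, hm1, hm2, hm3⟩ := hw1
      exact ⟨m, hm1, lt_trans hm2 h2, hm3⟩
    · intro ha
      obtain ⟨m, hm1, hm2, hm3⟩ := hw2 ha
      exact ⟨m, hm1, lt_trans hm2 h2, hm3⟩

lemma sound_WCond : WCond (contentVec T) := by
  have key : ∀ (k l : Fin n) (a : ℕ), k < l → contentVec T k = a → contentVec T l = a →
      (∃ m, k < m ∧ m < l ∧ contentVec T m = a + 1) ∧
      (1 ≤ a → ∃ m, k < m ∧ m < l ∧ contentVec T m + 1 = a) := by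
    intro k l a hkl hka hla
    have hmk := T.mem k
    have hml := T.mem l
    rcases hTk : T.pos k with ⟨x1, y1⟩
    rcases hTl : T.pos l with ⟨x2, y2⟩
    rw [hTk, mem_diff_iff] at hmk
    rw [hTl, mem_diff_iff] at hml
    simp only [contentVec, hTk] at hka
    simp only [contentVec, hTl] at hla
    have hTk' : T.pos k = (x1, x1 + a) := by
      rw [hTk, Prod.mk.injEq]
      exact ⟨rfl, by omega⟩
    have hTl' : T.pos l = (x2, x2 + a) := by
      rw [hTl, Prod.mk.injEq]
      exact ⟨rfl, by omega⟩
    rcases lt_trichotomy x1 x2 with h | h | h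
    · obtain ⟨-, w1, w2⟩ := diag_all T (x2 - x1 - 1) k l x1 a hTk'
        (by rw [hTl', Prod.mk.injEq]; omega)
      exact ⟨w1, w2⟩
    · exact absurd (T.inj (by rw [hTk', hTl', h])) (ne_of_lt hkl)
    · obtain ⟨hlk, -, -⟩ := diag_all T (x1 - x2 - 1) l k x2 a hTl'
        (by rw [hTk', Prod.mk.injEq]; omega)
      exact absurd (lt_trans hkl hlk) (lt_irrefl k)
  constructor
  · intro k l hkl h0k h0l
    obtain ⟨⟨m, hm1, hm2, hm3⟩, -⟩ := key k l 0 hkl h0k h0l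
    exact ⟨m, hm1, hm2, hm3⟩
  · intro k l hkl h1k heq
    obtain ⟨w1, w2⟩ := key k l (contentVec T k) hkl rfl heq.symm
    exact ⟨w2 h1k, w1⟩

end Sound

/-- the map `Θ : T ↦ c(T)` defines a canonical bijection between
the set `F(n)` of standard skew shifted tableaux of size `n` (identified by
content-preserving correspondences matching the entries) and the set `W′(n)`
of sequences in `ℤ_{≥0}ⁿ` satisfying the conditions (a), (b) of `WCond`. -/
theorem tableaux_content_bijection (n : ℕ) :
    ∃ Θ : Quotient (tabSetoid n) ≃ {v : Fin n → ℕ // WCond v},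
      ∀ T : SSST n, (Θ (Quotient.mk (tabSetoid n) T) : Fin n → ℕ) = contentVec T := by
  let f : Quotient (tabSetoid n) → {v : Fin n → ℕ // WCond v} :=
    Quotient.lift (fun T => (⟨contentVec T, sound_WCond T⟩ : {v : Fin n → ℕ // WCond v}))
      (fun a b hab => Subtype.ext hab)
  have hbij : Function.Bijective f := by
    constructor
    · intro x y
      refine Quotient.inductionOn₂ x y ?_
      intro T T' h
      apply Quotient.sound
      exact Subtype.ext_iff.1 h
    · rintro ⟨w, hw⟩
      exact ⟨Quotient.mk _ (Tab w hw), Subtype.ext (Tab_content w hw)⟩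
  exact ⟨Equiv.ofBijective f hbij, fun T => rfl⟩

end
end
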